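/- arXiv:2301.11740 — 2 statements merged into one kernel-verified Lean document; each statement's English description precedes it below -/
import Mathlib

section
/- Let 𝔸 = (A, ≤, →, Σ) be an implicative algebra with |A| < κ for a strongly inaccessible cardinal κ, and let W, ∈_W, =_W and the interpretation ‖·‖ be as defined below. For every formula in context φ[x̄, y, z] with x̄ of length n, writing ∀z∈y φ for ∀z(z ∈ y → φ): ‖∀z∈y φ [x̄, y]‖ ≡_{Σ[W^{n+1}]} the function (ᾱ, β) ↦ ∀⃗_{u∈dom(β)} (β(u) → ‖φ[x̄, y, z]‖(ᾱ, β, u)). -/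
universe u

infixl:65 " ♯ " => max

/-- An implicative algebra `𝔸 = (A, ≤, →, Σ)`:  a complete lattice `(A, ≤)` together with an
implication `imp` which is antitone in its first argument, monotone in its second argument and
turns infima in the second argument into infima, and a separator `Sig ⊆ A` which is upward
closed, closed under modus ponens and contains the combinators `K` and `S`. -/
structure ImplicativeAlgebra (A : Type u) [CompleteLattice A] where
  imp : A → A → A
  imp_antitone : ∀ ⦃a a' b : A⦄, a ≤ a' → imp a' b ≤ imp a b
  imp_monotone : ∀ ⦃a b b' : A⦄, b ≤ b' → imp a b ≤ imp a b'
  imp_sInf : ∀ (a : A) (S : Set A), imp a (sInf S) = ⨅ b ∈ S, imp a b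
  Sig : Set A
  Sig_upward : ∀ ⦃a b : A⦄, a ∈ Sig → a ≤ b → b ∈ Sig
  Sig_mp : ∀ ⦃a b : A⦄, imp a b ∈ Sig → a ∈ Sig → b ∈ Sig
  Sig_K : (⨅ a : A, ⨅ b : A, imp a (imp b a)) ∈ Sig
  Sig_S : (⨅ a : A, ⨅ b : A, ⨅ c : A,
      imp (imp a (imp b c)) (imp (imp a b) (imp a c))) ∈ Sig

namespace ImplicativeAlgebra

variable {A : Type u} [CompleteLattice A]

/-- `a × b := ⨅ x, ((a → (b → x)) → x)`. -/
def times (IA : ImplicativeAlgebra A) (a b : A) : A :=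
  ⨅ x : A, IA.imp (IA.imp a (IA.imp b x)) x

/-- `a + b := ⨅ x, ((a → x) → ((b → x) → x))`. -/
def plus (IA : ImplicativeAlgebra A) (a b : A) : A :=
  ⨅ x : A, IA.imp (IA.imp a x) (IA.imp (IA.imp b x) x)

/-- `∃⃗_{i} f i := ⨅ x, ((⨅ i, (f i → x)) → x)`.  (`∀⃗` is just `⨅`.) -/
def aex (IA : ImplicativeAlgebra A) {ι : Sort*} (f : ι → A) : A :=
  ⨅ x : A, IA.imp (⨅ i, IA.imp (f i) x) x

/-- `φ ⊢_{Σ[I]} ψ` iff `⨅ i, (φ i → ψ i) ∈ Σ`. -/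
def SigLe (IA : ImplicativeAlgebra A) {ι : Sort*} (f g : ι → A) : Prop :=
  (⨅ i, IA.imp (f i) (g i)) ∈ IA.Sig

/-- `φ ≡_{Σ[I]} ψ` iff `φ ⊢_{Σ[I]} ψ` and `ψ ⊢_{Σ[I]} φ`. -/
def SigEquiv (IA : ImplicativeAlgebra A) {ι : Sort*} (f g : ι → A) : Prop :=
  IA.SigLe f g ∧ IA.SigLe g f

end ImplicativeAlgebra

/-- Pre-elements of the cumulative hierarchy of partial functions valued in `A`:
an element is an `A`-labelled family of previously constructed elements, i.e. a partial
function (presented by a family indexed by its domain) from earlier elements to `A`. -/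
inductive PreW (A : Type u) : Type (u + 1)
  | mk (ι : Type u) (fam : ι → PreW A) (val : ι → A)

namespace PreW

variable {A : Type u}

/-- The (index type of the) domain of a partial function. -/
def dom : PreW A → Type u
  | ⟨ι, _, _⟩ => ι

/-- The family of elements of the domain. -/
def fam : (w : PreW A) → w.dom → PreW A
  | ⟨_, f, _⟩ => f

/-- The values in `A` of the partial function. -/
def val : (w : PreW A) → w.dom → A
  | ⟨_, _, v⟩ => v

/-- `w` is hereditarily of size `< κ`:  this carves out exactly the elements of the stage
`W_κ` of the hierarchy (for `κ` inaccessible). -/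
def HSmall (κ : Cardinal.{u}) : PreW A → Prop
  | ⟨ι, f, _⟩ => Cardinal.mk ι < κ ∧ ∀ i, HSmall κ (f i)

theorem HSmall.fam {κ : Cardinal.{u}} :
    ∀ {w : PreW A}, w.HSmall κ → ∀ i : w.dom, (w.fam i).HSmall κ
  | ⟨_, _, _⟩, h, i => h.2 i

/-- The rank of an element of the hierarchy. -/
noncomputable def rank : PreW A → Ordinal.{u}
  | ⟨_, f, _⟩ => ⨆ i, Order.succ (rank (f i))

theorem rank_lt_mk {ι : Type u} (f : ι → PreW A) (v : ι → A) (i : ι) :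
    (f i).rank < (PreW.mk ι f v).rank := by
  have h : Order.succ (f i).rank ≤ ⨆ j, Order.succ (f j).rank := Ordinal.le_iSup _ i
  have : (f i).rank < ⨆ j, Order.succ (f j).rank :=
    lt_of_lt_of_le (Order.lt_succ _) h
  simpa [rank] using this

end PreW

namespace ImplicativeAlgebra

variable {A : Type u} [CompleteLattice A]

/-- `α =_W β`, defined by recursion on rank:
`α =_W β := (α ⊆_W β) × (β ⊆_W α)` where
`α ⊆_W β := ∀⃗_{t ∈ dom α} (α t → (fam α t ∈_W β))` and
`γ ∈_W β := ∃⃗_{s ∈ dom β} (β s × (fam β s =_W γ))`. -/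
noncomputable def eqW (IA : ImplicativeAlgebra A) : PreW A → PreW A → A
  | ⟨ι₁, f₁, v₁⟩, ⟨ι₂, f₂, v₂⟩ =>
    IA.times
      (⨅ t : ι₁, IA.imp (v₁ t)
        (IA.aex fun s : ι₂ => IA.times (v₂ s) (IA.eqW (f₂ s) (f₁ t))))
      (⨅ t : ι₂, IA.imp (v₂ t)
        (IA.aex fun s : ι₁ => IA.times (v₁ s) (IA.eqW (f₁ s) (f₂ t))))
termination_by α β => max α.rank β.rank
decreasing_by
  · exact max_lt (lt_max_of_lt_right (PreW.rank_lt_mk f₂ v₂ s))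
      (lt_max_of_lt_left (PreW.rank_lt_mk f₁ v₁ t))
  · exact max_lt (lt_max_of_lt_left (PreW.rank_lt_mk f₁ v₁ s))
      (lt_max_of_lt_right (PreW.rank_lt_mk f₂ v₂ t))

/-- `α ∈_W β := ∃⃗_{s ∈ dom β} (β s × (fam β s =_W α))`. -/
noncomputable def memW (IA : ImplicativeAlgebra A) (α β : PreW A) : A :=
  IA.aex fun s : β.dom => IA.times (β.val s) (IA.eqW (β.fam s) α)

/-- `α ⊆_W β := ∀⃗_{t ∈ dom α} (α t → (fam α t ∈_W β))`. -/
noncomputable def subW (IA : ImplicativeAlgebra A) (α β : PreW A) : A :=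
  ⨅ t : α.dom, IA.imp (α.val t) (IA.memW (α.fam t) β)

end ImplicativeAlgebra

/-- The stage `W = W_κ` of the hierarchy: all hereditarily `< κ`-sized elements. -/
def WSet (A : Type u) (κ : Cardinal.{u}) : Type (u + 1) :=
  {w : PreW A // w.HSmall κ}

/-- An element of the domain of `w ∈ W`, as an element of `W`. -/
def WSet.fam {A : Type u} {κ : Cardinal.{u}} (w : WSet A κ) (i : w.1.dom) : WSet A κ :=
  ⟨w.1.fam i, w.2.fam i⟩

/-- Formulas (in context of length `n`) of the first-order language of set theory, with
(de Bruijn-style) variables `Fin n`, binary predicates `∈` and `=`, connectives `⊥`, `∧`, `∨`,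
`→` and quantifiers `∃`, `∀` (binding the last variable of the enlarged context). -/
inductive SetFormula : ℕ → Type
  | bot {n : ℕ} : SetFormula n
  | mem {n : ℕ} (i j : Fin n) : SetFormula n
  | eq {n : ℕ} (i j : Fin n) : SetFormula n
  | and {n : ℕ} (φ ψ : SetFormula n) : SetFormula n
  | or {n : ℕ} (φ ψ : SetFormula n) : SetFormula n
  | imp {n : ℕ} (φ ψ : SetFormula n) : SetFormula n
  | ex {n : ℕ} (φ : SetFormula (n + 1)) : SetFormula n
  | all {n : ℕ} (φ : SetFormula (n + 1)) : SetFormula n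

namespace SetFormula

/-- Renaming of variables (since the only terms of the language of set theory are variables,
substitution is a special case). -/
def rename : {n m : ℕ} → (Fin n → Fin m) → SetFormula n → SetFormula m
  | _, _, _, .bot => .bot
  | _, _, f, .mem i j => .mem (f i) (f j)
  | _, _, f, .eq i j => .eq (f i) (f j)
  | _, _, f, .and φ ψ => .and (φ.rename f) (ψ.rename f)
  | _, _, f, .or φ ψ => .or (φ.rename f) (ψ.rename f)
  | _, _, f, .imp φ ψ => .imp (φ.rename f) (ψ.rename f)
  | _, _, f, .ex φ => .ex (φ.rename (Fin.snoc (Fin.castSucc ∘ f) (Fin.last _)))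
  | _, _, f, .all φ => .all (φ.rename (Fin.snoc (Fin.castSucc ∘ f) (Fin.last _)))

/-- Universal closure `∀x₁ … ∀xₙ φ` of a formula in context of length `n`. -/
def allClose : {n : ℕ} → SetFormula n → SetFormula 0
  | 0, φ => φ
  | _ + 1, φ => allClose (.all φ)

end SetFormula

namespace ImplicativeAlgebra

variable {A : Type u} [CompleteLattice A]

/-- The interpretation `‖φ[x₁,…,xₙ]‖ : Wⁿ → A` of a formula in context, by recursion on the
structure of `φ`:  atomic formulas are interpreted by `∈_W` and `=_W`, `∧` by `×`, `∨` by `+`,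
`→` by `→`, `∃` by `∃⃗` over `W` and `∀` by `∀⃗` (i.e. `⨅`) over `W`. -/
noncomputable def interp (IA : ImplicativeAlgebra A) (κ : Cardinal.{u}) :
    {n : ℕ} → SetFormula n → (Fin n → WSet A κ) → A
  | _, .bot, _ => ⊥
  | _, .mem i j, v => IA.memW (v i).1 (v j).1
  | _, .eq i j, v => IA.eqW (v i).1 (v j).1
  | _, .and φ ψ, v => IA.times (IA.interp κ φ v) (IA.interp κ ψ v)
  | _, .or φ ψ, v => IA.plus (IA.interp κ φ v) (IA.interp κ ψ v)
  | _, .imp φ ψ, v => IA.imp (IA.interp κ φ v) (IA.interp κ ψ v)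
  | _, .ex φ, v => IA.aex fun β : WSet A κ => IA.interp κ φ (Fin.snoc v β)
  | _, .all φ, v => ⨅ β : WSet A κ, IA.interp κ φ (Fin.snoc v β)

end ImplicativeAlgebra

namespace ImplicativeAlgebra

variable {A : Type u} [CompleteLattice A] (IA : ImplicativeAlgebra A)

theorem imp_iInf {ι : Sort v} (a : A) (f : ι → A) :
    IA.imp a (⨅ i, f i) = ⨅ i, IA.imp a (f i) := by
  rw [iInf, IA.imp_sInf]
  apply le_antisymm
  · exact le_iInf fun i => iInf_le_of_le (f i) (by simp)
  · refine le_iInf₂ fun b hb => ?_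
    obtain ⟨i, rfl⟩ := hb
    exact iInf_le _ i

/-- Application in an implicative algebra. -/
noncomputable def ap (a b : A) : A := sInf {x | a ≤ IA.imp b x}

theorem le_imp_ap (a b : A) : a ≤ IA.imp b (IA.ap a b) := by
  rw [ap, IA.imp_sInf]
  exact le_iInf₂ fun x hx => hx

theorem ap_le {a b c : A} (h : a ≤ IA.imp b c) : IA.ap a b ≤ c := sInf_le h

theorem ap_mono {a a' b b' : A} (ha : a ≤ a') (hb : b ≤ b') :
    IA.ap a b ≤ IA.ap a' b' :=
  IA.ap_le <| ha.trans <| (IA.le_imp_ap a' b').trans (IA.imp_antitone hb)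

theorem ap_mem {a b : A} (ha : a ∈ IA.Sig) (hb : b ∈ IA.Sig) : IA.ap a b ∈ IA.Sig :=
  IA.Sig_mp (IA.Sig_upward ha (IA.le_imp_ap a b)) hb

theorem le_imp_of_ap_le {e a b : A} (h : IA.ap e a ≤ b) : e ≤ IA.imp a b :=
  (IA.le_imp_ap e a).trans (IA.imp_monotone h)

/-- The combinator `K` as an element. -/
def Kc : A := ⨅ a : A, ⨅ b : A, IA.imp a (IA.imp b a)
/-- The combinator `S` as an element. -/
def Sc : A := ⨅ a : A, ⨅ b : A, ⨅ c : A,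
  IA.imp (IA.imp a (IA.imp b c)) (IA.imp (IA.imp a b) (IA.imp a c))

theorem Kc_mem : IA.Kc ∈ IA.Sig := IA.Sig_K
theorem Sc_mem : IA.Sc ∈ IA.Sig := IA.Sig_S

theorem Kc_le (a b : A) : IA.Kc ≤ IA.imp a (IA.imp b a) := by
  refine (iInf_le _ a).trans (iInf_le _ b)

theorem Sc_le (a b c : A) :
    IA.Sc ≤ IA.imp (IA.imp a (IA.imp b c)) (IA.imp (IA.imp a b) (IA.imp a c)) :=
  ((iInf_le _ a).trans (iInf_le _ b)).trans (iInf_le _ c)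

end ImplicativeAlgebra

/-- Combinatory terms with constants from `A` and `n` free variables. -/
inductive Tm (A : Type u) : ℕ → Type u
  | var {n : ℕ} (i : Fin n) : Tm A n
  | cst {n : ℕ} (a : A) : Tm A n
  | app {n : ℕ} (t u : Tm A n) : Tm A n

namespace ImplicativeAlgebra

variable {A : Type u} [CompleteLattice A] (IA : ImplicativeAlgebra A)

theorem ap_le_of_le_imp {e a b c : A} (he : e ≤ IA.imp b c) (h : a ≤ b) :
    IA.ap e a ≤ c :=
  IA.ap_le (he.trans (IA.imp_antitone h))

/-- Denotation of a term in an environment. -/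
noncomputable def den : {n : ℕ} → (Fin n → A) → Tm A n → A
  | _, ρ, .var i => ρ i
  | _, _, .cst a => a
  | _, ρ, .app t u => IA.ap (den ρ t) (den ρ u)

@[simp] theorem den_var {n : ℕ} (ρ : Fin n → A) (i : Fin n) :
    IA.den ρ (.var i) = ρ i := by rw [den]
@[simp] theorem den_cst {n : ℕ} (ρ : Fin n → A) (a : A) :
    IA.den ρ (.cst a) = a := by rw [den]
@[simp] theorem den_app {n : ℕ} (ρ : Fin n → A) (t u : Tm A n) :
    IA.den ρ (.app t u) = IA.ap (IA.den ρ t) (IA.den ρ u) := by rw [den]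

/-- All constants of the term are in the separator. -/
def Good : {n : ℕ} → Tm A n → Prop
  | _, .var _ => True
  | _, .cst a => a ∈ IA.Sig
  | _, .app t u => Good t ∧ Good u

@[simp] theorem good_var {n : ℕ} (i : Fin n) : IA.Good (.var i) = True := by rw [Good]
@[simp] theorem good_cst {n : ℕ} (a : A) : IA.Good (.cst a : Tm A n) = (a ∈ IA.Sig) := by rw [Good]
@[simp] theorem good_app {n : ℕ} (t u : Tm A n) :
    IA.Good (.app t u) = (IA.Good t ∧ IA.Good u) := by rw [Good]

theorem den_mem : ∀ {n : ℕ} {t : Tm A n} {ρ : Fin n → A},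
    IA.Good t → (∀ k, ρ k ∈ IA.Sig) → IA.den ρ t ∈ IA.Sig
  | _, .var i, ρ, _, hρ => by simpa using hρ i
  | _, .cst _, _, h, _ => by rw [good_cst] at h; simpa using h
  | _, .app t u, ρ, h, hρ => by
      rw [good_app] at h
      rw [den_app]
      exact IA.ap_mem (den_mem h.1 hρ) (den_mem h.2 hρ)

/-- Bracket abstraction of the last variable. -/
noncomputable def brak : {n : ℕ} → Tm A (n + 1) → Tm A n
  | _, .var i => Fin.lastCases (.app (.app (.cst IA.Sc) (.cst IA.Kc)) (.cst IA.Kc))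
      (fun j => .app (.cst IA.Kc) (.var j)) i
  | _, .cst a => .app (.cst IA.Kc) (.cst a)
  | _, .app t u => .app (.app (.cst IA.Sc) (brak t)) (brak u)

theorem brak_good : ∀ {n : ℕ} {t : Tm A (n + 1)}, IA.Good t → IA.Good (IA.brak t)
  | _, .var i, _ => by
    refine Fin.lastCases ?_ (fun j => ?_) i <;>
      simp [brak, IA.Kc_mem, IA.Sc_mem]
  | _, .cst a, h => by
    rw [good_cst] at h
    simp only [brak, good_app, good_cst]
    exact ⟨IA.Kc_mem, h⟩
  | _, .app t u, h => by
    rw [good_app] at h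
    simp only [brak, good_app, good_cst]
    exact ⟨⟨IA.Sc_mem, brak_good h.1⟩, brak_good h.2⟩

theorem brak_le : ∀ {n : ℕ} (t : Tm A (n + 1)) (ρ : Fin n → A) (a : A),
    IA.den ρ (IA.brak t) ≤ IA.imp a (IA.den (Fin.snoc ρ a) t)
  | _, .var i, ρ, a => by
    refine Fin.lastCases ?_ (fun j => ?_) i
    · simp only [brak, Fin.lastCases_last, den_app, den_cst, den_var, Fin.snoc_last]
      have h1 : IA.ap IA.Sc IA.Kc ≤ IA.imp (IA.imp a (IA.imp a a)) (IA.imp a a) :=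
        IA.ap_le_of_le_imp (IA.Sc_le a (IA.imp a a) a) (IA.Kc_le a (IA.imp a a))
      exact IA.ap_le_of_le_imp h1 (IA.Kc_le a a)
    · simp only [brak, Fin.lastCases_castSucc, den_app, den_cst, den_var, Fin.snoc_castSucc]
      exact IA.ap_le (IA.Kc_le (ρ j) a)
  | _, .cst b, ρ, a => by
    simp only [brak, den_app, den_cst]
    exact IA.ap_le (IA.Kc_le b a)
  | _, .app t u, ρ, a => by
    have ht := brak_le t ρ a
    have hu := brak_le u ρ a
    simp only [brak, den_app, den_cst]
    set T := IA.den (Fin.snoc ρ a) t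
    set U := IA.den (Fin.snoc ρ a) u
    have ht' : IA.den ρ (IA.brak t) ≤ IA.imp a (IA.imp U (IA.ap T U)) :=
      ht.trans (IA.imp_monotone (IA.le_imp_ap T U))
    have h1 : IA.ap IA.Sc (IA.den ρ (IA.brak t)) ≤
        IA.imp (IA.imp a U) (IA.imp a (IA.ap T U)) :=
      IA.ap_le_of_le_imp (IA.Sc_le a U (IA.ap T U)) ht'
    have := IA.ap_le_of_le_imp h1 hu
    exact IA.le_imp_of_ap_le (IA.ap_le this)

end ImplicativeAlgebra
namespace Tm

variable {A : Type u}

/-- Renaming of term variables. -/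
def ren : {n m : ℕ} → (Fin n → Fin m) → Tm A n → Tm A m
  | _, _, σ, .var i => .var (σ i)
  | _, _, _, .cst a => .cst a
  | _, _, σ, .app t u => .app (ren σ t) (ren σ u)

end Tm

namespace ImplicativeAlgebra

variable {A : Type u} [CompleteLattice A] (IA : ImplicativeAlgebra A)

theorem den_ren : ∀ {n m : ℕ} (σ : Fin n → Fin m) (ρ : Fin m → A) (t : Tm A n),
    IA.den ρ (t.ren σ) = IA.den (ρ ∘ σ) t
  | _, _, σ, ρ, .var i => by simp [Tm.ren]
  | _, _, σ, ρ, .cst a => by simp [Tm.ren]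
  | _, _, σ, ρ, .app t u => by
    simp [Tm.ren, den_ren σ ρ t, den_ren σ ρ u]

theorem good_ren : ∀ {n m : ℕ} (σ : Fin n → Fin m) {t : Tm A n},
    IA.Good t → IA.Good (t.ren σ)
  | _, _, σ, .var i, _ => by simp [Tm.ren]
  | _, _, σ, .cst a, h => by simpa [Tm.ren] using h
  | _, _, σ, .app t u, h => by
    rw [good_app] at h
    simp only [Tm.ren, good_app]
    exact ⟨good_ren σ h.1, good_ren σ h.2⟩

/-- Semantic derivability: there is a uniform realizer (an `n`-ary combinatory term with
constants in the separator) of the entailment from the context family `Γ` to `b`. -/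
def Der {ι : Type v} {n : ℕ} (Γ : Fin n → ι → A) (b : ι → A) : Prop :=
  ∃ t : Tm A n, IA.Good t ∧
    ∀ (i : ι) (ρ : Fin n → A), (∀ k, ρ k ≤ Γ k i) → IA.den ρ t ≤ b i

namespace Der

variable {IA : ImplicativeAlgebra A} {ι : Type v} {ι' : Type w} {n : ℕ}
  {Γ : Fin n → ι → A} {a b c : ι → A}

theorem var (k : Fin n) : IA.Der Γ (Γ k) :=
  ⟨.var k, by simp, fun i ρ h => by simpa using h k⟩

theorem cst {e : A} (he : e ∈ IA.Sig) (hb : ∀ i, e ≤ b i) : IA.Der Γ b :=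
  ⟨.cst e, by simpa using he, fun i ρ _ => by simpa using hb i⟩

theorem mono (d : IA.Der Γ a) (h : ∀ i, a i ≤ b i) : IA.Der Γ b := by
  obtain ⟨t, ht, hd⟩ := d
  exact ⟨t, ht, fun i ρ hρ => (hd i ρ hρ).trans (h i)⟩

theorem app (df : IA.Der Γ (fun i => IA.imp (a i) (b i))) (da : IA.Der Γ a) :
    IA.Der Γ b := by
  obtain ⟨t, ht, hdt⟩ := df
  obtain ⟨s, hs, hds⟩ := da
  refine ⟨.app t s, by rw [good_app]; exact ⟨ht, hs⟩, fun i ρ hρ => by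
    rw [den_app]
    exact IA.ap_le_of_le_imp (hdt i ρ hρ) (hds i ρ hρ)⟩

theorem lam (d : IA.Der (Fin.snoc Γ a) b) :
    IA.Der Γ (fun i => IA.imp (a i) (b i)) := by
  obtain ⟨t, ht, hd⟩ := d
  refine ⟨IA.brak t, IA.brak_good ht, fun i ρ hρ => ?_⟩
  refine (IA.brak_le t ρ (a i)).trans (IA.imp_monotone ?_)
  refine hd i (Fin.snoc ρ (a i)) fun k => ?_
  refine Fin.lastCases ?_ (fun j => ?_) k <;> simp [hρ _]

theorem ren (g : ι' → ι) {m : ℕ} (σ : Fin n → Fin m) {Δ : Fin m → ι' → A}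
    (hΔ : ∀ (k : Fin n) (i' : ι'), Δ (σ k) i' ≤ Γ k (g i'))
    (d : IA.Der Γ b) : IA.Der Δ (fun i' => b (g i')) := by
  obtain ⟨t, ht, hd⟩ := d
  refine ⟨t.ren σ, IA.good_ren σ ht, fun i' ρ hρ => ?_⟩
  rw [IA.den_ren]
  exact hd (g i') (ρ ∘ σ) fun k => (hρ (σ k)).trans (hΔ k i')

theorem wk {a : ι → A} (d : IA.Der Γ b) : IA.Der (Fin.snoc Γ a) b :=
  d.ren (g := id) (σ := Fin.castSucc) (Δ := Fin.snoc Γ a) (fun k i' => by simp)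

theorem shift (g : ι' → ι) (d : IA.Der Γ b) :
    IA.Der (fun k => Γ k ∘ g) (fun i' => b (g i')) :=
  d.ren g id fun _ _ => le_rfl

/-- Weaken and reindex at once: the typical context move for `∃`-elimination. -/
theorem wkg (g : ι' → ι) (h : ι' → A) (d : IA.Der Γ b) :
    IA.Der (Fin.snoc (fun k => Γ k ∘ g) h) (fun i' => b (g i')) :=
  (d.shift g).wk

theorem inf {J : ι → Type w} {c : ∀ i, J i → A}
    (d : IA.Der (fun k (p : Σ i, J i) => Γ k p.1) (fun p => c p.1 p.2)) :
    IA.Der Γ (fun i => ⨅ j, c i j) := by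
  obtain ⟨t, ht, hd⟩ := d
  exact ⟨t, ht, fun i ρ hρ => le_iInf fun j => hd ⟨i, j⟩ ρ hρ⟩

end Der

variable {IA : ImplicativeAlgebra A} {ι : Type v} {n : ℕ}
  {Γ : Fin n → ι → A} {a b c h : ι → A}

theorem Der.var_last : IA.Der (Fin.snoc Γ h) h :=
  (Der.var (Fin.last n)).mono fun i => by rw [Fin.snoc_last]

theorem Der.var_cast (k : Fin n) : IA.Der (Fin.snoc Γ h) (Γ k) :=
  (Der.var k.castSucc).mono fun i => by rw [Fin.snoc_castSucc]

theorem Der.var_snd {a b : ι → A} : IA.Der (Fin.snoc (Fin.snoc Γ a) b) a :=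
  (Der.var_cast (Fin.last n)).mono fun i => by rw [Fin.snoc_last]

theorem der_sigLe (d : IA.Der (Fin.elim0 : Fin 0 → ι → A)
    (fun i => IA.imp (a i) (b i))) : IA.SigLe a b := by
  obtain ⟨t, ht, hd⟩ := d
  have hmem : IA.den (fun k : Fin 0 => k.elim0) t ∈ IA.Sig :=
    IA.den_mem ht fun k => k.elim0
  exact IA.Sig_upward hmem (le_iInf fun i => hd i _ fun k => k.elim0)

/-- `×`-introduction. -/
theorem Der.times_intro (da : IA.Der Γ a) (db : IA.Der Γ b) :
    IA.Der Γ (fun i => IA.times (a i) (b i)) := by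
  refine Der.inf (J := fun _ => A)
    (c := fun i x => IA.imp (IA.imp (a i) (IA.imp (b i) x)) x) ?_
  refine Der.lam (a := fun p : Σ _ : ι, A => IA.imp (a p.1) (IA.imp (b p.1) p.2))
    (b := fun p => p.2) ?_
  exact Der.app (Der.app Der.var_last (da.wkg _ _)) (db.wkg _ _)

/-- `×`-elimination. -/
theorem Der.times_elim (dp : IA.Der Γ (fun i => IA.times (a i) (b i)))
    (dc : IA.Der (Fin.snoc (Fin.snoc Γ a) b) c) : IA.Der Γ c := by
  have h1 : IA.Der Γ (fun i => IA.imp (IA.imp (a i) (IA.imp (b i) (c i))) (c i)) :=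
    dp.mono fun i => iInf_le _ (c i)
  exact h1.app (Der.lam (Der.lam dc))

/-- `∃⃗`-introduction. -/
theorem Der.aex_intro {J : ι → Type w} {f : ∀ i, J i → A} (j : ∀ i, J i)
    (d : IA.Der Γ (fun i => f i (j i))) :
    IA.Der Γ (fun i => IA.aex (f i)) := by
  refine Der.inf (J := fun _ => A)
    (c := fun i x => IA.imp (⨅ jj, IA.imp (f i jj) x) x) ?_
  refine Der.lam (a := fun p : Σ _ : ι, A => ⨅ jj, IA.imp (f p.1 jj) p.2)
    (b := fun p => p.2) ?_
  have hk : IA.Der (Fin.snoc (fun k (p : Σ _ : ι, A) => Γ k p.1)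
      (fun p : Σ _ : ι, A => ⨅ jj, IA.imp (f p.1 jj) p.2))
      (fun p : Σ _ : ι, A => IA.imp (f p.1 (j p.1)) p.2) :=
    Der.var_last.mono fun p => iInf_le _ (j p.1)
  exact hk.app (d.wkg _ _)

/-- `∃⃗`-elimination. -/
theorem Der.aex_elim {J : ι → Type w} {f : ∀ i, J i → A}
    (dm : IA.Der Γ (fun i => IA.aex (f i)))
    (dc : IA.Der (Fin.snoc (fun k (p : Σ i, J i) => Γ k p.1)
        (fun p : Σ i, J i => f p.1 p.2)) (fun p => c p.1)) :
    IA.Der Γ c := by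
  have h1 : IA.Der Γ (fun i => IA.imp (⨅ j : J i, IA.imp (f i j) (c i)) (c i)) :=
    dm.mono fun i => iInf_le _ (c i)
  exact h1.app (Der.inf (J := J) (c := fun i j => IA.imp (f i j) (c i)) (Der.lam dc))

/-- `+`-introduction (left). -/
theorem Der.plus_inl (da : IA.Der Γ a) :
    IA.Der Γ (fun i => IA.plus (a i) (b i)) := by
  refine Der.inf (J := fun _ => A)
    (c := fun i x => IA.imp (IA.imp (a i) x) (IA.imp (IA.imp (b i) x) x)) ?_
  refine Der.lam (a := fun p : Σ _ : ι, A => IA.imp (a p.1) p.2) ?_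
  refine Der.lam (a := fun p : Σ _ : ι, A => IA.imp (b p.1) p.2)
    (b := fun p => p.2) ?_
  exact Der.app Der.var_snd ((da.wkg Sigma.fst _).wk)

/-- `+`-introduction (right). -/
theorem Der.plus_inr (db : IA.Der Γ b) :
    IA.Der Γ (fun i => IA.plus (a i) (b i)) := by
  refine Der.inf (J := fun _ => A)
    (c := fun i x => IA.imp (IA.imp (a i) x) (IA.imp (IA.imp (b i) x) x)) ?_
  refine Der.lam (a := fun p : Σ _ : ι, A => IA.imp (a p.1) p.2) ?_
  refine Der.lam (a := fun p : Σ _ : ι, A => IA.imp (b p.1) p.2)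
    (b := fun p => p.2) ?_
  exact Der.app Der.var_last ((db.wkg Sigma.fst _).wk)

/-- `+`-elimination. -/
theorem Der.plus_elim (dp : IA.Der Γ (fun i => IA.plus (a i) (b i)))
    (d1 : IA.Der (Fin.snoc Γ a) c) (d2 : IA.Der (Fin.snoc Γ b) c) :
    IA.Der Γ c := by
  have h1 : IA.Der Γ
      (fun i => IA.imp (IA.imp (a i) (c i)) (IA.imp (IA.imp (b i) (c i)) (c i))) :=
    dp.mono fun i => iInf_le _ (c i)
  exact (h1.app (Der.lam d1)).app (Der.lam d2)

end ImplicativeAlgebra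
namespace PreW

variable {A : Type u}

@[simp] theorem dom_mk (ι : Type u) (f : ι → PreW A) (v : ι → A) :
    (PreW.mk ι f v).dom = ι := rfl
@[simp] theorem fam_mk (ι : Type u) (f : ι → PreW A) (v : ι → A) :
    (PreW.mk ι f v).fam = f := rfl
@[simp] theorem val_mk (ι : Type u) (f : ι → PreW A) (v : ι → A) :
    (PreW.mk ι f v).val = v := rfl

theorem fam_rank_lt : ∀ (α : PreW A) (i : α.dom), (α.fam i).rank < α.rank
  | ⟨_, f, v⟩, i => PreW.rank_lt_mk f v i

end PreW

namespace ImplicativeAlgebra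

variable {A : Type u} [CompleteLattice A] (IA : ImplicativeAlgebra A)

theorem eqW_def (α β : PreW A) :
    IA.eqW α β = IA.times (IA.subW α β) (IA.subW β α) := by
  cases α with
  | mk ι₁ f₁ v₁ =>
    cases β with
    | mk ι₂ f₂ v₂ =>
      rw [eqW]
      rfl

variable {IA}

theorem der_elt {ι : Type v} {b : ι → A}
    (d : IA.Der (Fin.elim0 : Fin 0 → ι → A) b) : ∃ e ∈ IA.Sig, ∀ i, e ≤ b i := by
  obtain ⟨t, ht, hd⟩ := d
  refine ⟨IA.den (fun k : Fin 0 => k.elim0) t,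
    IA.den_mem ht (fun k => k.elim0), fun i => hd i (fun k => k.elim0) (fun k => k.elim0)⟩

variable (IA)

/-- The term `λx.λf. f (x x f)`. -/
private noncomputable def tX : Tm A 2 :=
  .app (.var 1) (.app (.app (.var 0) (.var 0)) (.var 1))

/-- Turing's fixpoint combinator (one half). -/
noncomputable def Xc : A := IA.den Fin.elim0 (IA.brak (IA.brak (tX (A := A))))

theorem Xc_mem : IA.Xc ∈ IA.Sig := by
  refine IA.den_mem (IA.brak_good (IA.brak_good ?_)) (fun k => k.elim0)
  simp [tX]

/-- `Y f := (X X) f`. -/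
noncomputable def Yc (f : A) : A := IA.ap (IA.ap IA.Xc IA.Xc) f

theorem Yc_mem {f : A} (hf : f ∈ IA.Sig) : IA.Yc f ∈ IA.Sig :=
  IA.ap_mem (IA.ap_mem IA.Xc_mem IA.Xc_mem) hf

theorem Yc_le (f : A) : IA.Yc f ≤ IA.ap f (IA.Yc f) := by
  have h0 : IA.Xc ≤ IA.imp IA.Xc
      (IA.den (Fin.snoc Fin.elim0 IA.Xc) (IA.brak (tX (A := A)))) :=
    IA.brak_le _ _ _
  have h1 : IA.ap IA.Xc IA.Xc ≤
      IA.den (Fin.snoc Fin.elim0 IA.Xc) (IA.brak (tX (A := A))) := IA.ap_le h0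
  have h2 := IA.brak_le (tX (A := A)) (Fin.snoc Fin.elim0 IA.Xc) f
  have h3 : IA.ap (IA.ap IA.Xc IA.Xc) f ≤
      IA.den (Fin.snoc (Fin.snoc Fin.elim0 IA.Xc) f) (tX (A := A)) :=
    IA.ap_le (h1.trans h2)
  refine h3.trans ?_
  have e0 : (Fin.snoc (Fin.snoc Fin.elim0 IA.Xc) f : Fin 2 → A) 0 = IA.Xc := rfl
  have e1 : (Fin.snoc (Fin.snoc Fin.elim0 IA.Xc) f : Fin 2 → A) 1 = f := rfl
  simp only [tX, den_app, den_var, e0, e1]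
  exact le_rfl

/-- Fixpoint induction: a uniform realizer for a rank-indexed family from a step realizer. -/
theorem sig_fix {ι : Type v} (g : ι → A) (rk : ι → Ordinal.{u}) {f : A}
    (hf : f ∈ IA.Sig)
    (step : ∀ (x : A) (i : ι), (∀ j, rk j < rk i → x ≤ g j) → IA.ap f x ≤ g i) :
    ∃ r ∈ IA.Sig, ∀ i, r ≤ g i := by
  refine ⟨IA.Yc f, IA.Yc_mem hf, ?_⟩
  have main : ∀ (o : Ordinal.{u}) (i : ι), rk i ≤ o → IA.Yc f ≤ g i := by
    intro o
    induction o using Ordinal.induction with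
    | h o IH =>
      intro i hi
      refine (IA.Yc_le f).trans (step (IA.Yc f) i fun j hj => ?_)
      exact IH (rk j) (lt_of_lt_of_le hj hi) j le_rfl
  exact fun i => main (rk i) i le_rfl

variable {IA}

/-- A uniform realizer of reflexivity of `=_W`. -/
theorem exists_refl : ∃ r ∈ IA.Sig, ∀ α : PreW A, r ≤ IA.eqW α α := by
  classical
  set H : PreW A → A :=
    fun α => ⨅ γ : {γ : PreW A // γ.rank < α.rank}, IA.eqW γ.1 γ.1 with hH
  have d0 : IA.Der (Fin.elim0 : Fin 0 → PreW A → A)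
      (fun α => IA.imp (H α) (IA.eqW α α)) := by
    refine Der.lam ?_
    refine Der.mono ?_ (fun α => le_of_eq (IA.eqW_def α α).symm)
    have dsub : IA.Der (Fin.snoc Fin.elim0 H) (fun α => IA.subW α α) := by
      refine Der.inf (J := fun α : PreW A => α.dom)
        (c := fun α t => IA.imp (α.val t) (IA.memW (α.fam t) α)) ?_
      refine Der.lam (a := fun p : Σ α : PreW A, α.dom => p.1.val p.2)
        (b := fun p => IA.memW (p.1.fam p.2) p.1) ?_
      -- pointer to H
      have hH1 : IA.Der (Fin.snoc (fun k (p : Σ α : PreW A, α.dom) =>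
          (Fin.snoc Fin.elim0 H : Fin 1 → PreW A → A) k p.1)
          (fun p : Σ α : PreW A, α.dom => p.1.val p.2))
          (fun p : Σ α : PreW A, α.dom => IA.eqW (p.1.fam p.2) (p.1.fam p.2)) := by
        refine (Der.var_cast 0).mono (fun p => ?_)
        show (Fin.snoc Fin.elim0 H : Fin 1 → PreW A → A) 0 p.1 ≤ _
        have : (Fin.snoc Fin.elim0 H : Fin 1 → PreW A → A) 0 = H := rfl
        rw [this]
        simp only [hH]
        exact iInf_le (fun γ : {γ : PreW A // γ.rank < p.1.rank} => IA.eqW γ.1 γ.1)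
          ⟨p.1.fam p.2, PreW.fam_rank_lt p.1 p.2⟩
      exact Der.aex_intro (J := fun p : Σ α : PreW A, α.dom => p.1.dom)
        (f := fun p s => IA.times (p.1.val s)
          (IA.eqW (p.1.fam s) (p.1.fam p.2)))
        (fun p => p.2) (Der.times_intro Der.var_last hH1)
    exact Der.times_intro dsub dsub
  obtain ⟨e, he, hd⟩ := der_elt d0
  refine IA.sig_fix (fun α : PreW A => IA.eqW α α) PreW.rank he ?_
  intro x α hx
  refine IA.ap_le_of_le_imp (hd α) (le_iInf fun γ => hx γ.1 γ.2)
end ImplicativeAlgebra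
namespace ImplicativeAlgebra

variable {A : Type u} [CompleteLattice A] {IA : ImplicativeAlgebra A}

theorem Der.hyp {ι : Type v} {n : ℕ} {Γ : Fin n → ι → A} {b : ι → A}
    (k : Fin n) (h : ∀ i, Γ k i ≤ b i) : IA.Der Γ b := (Der.var k).mono h

theorem Der.fit {ι : Type v} {n m : ℕ} {Γ : Fin n → ι → A} {Δ : Fin m → ι → A}
    {b : ι → A} (σ : Fin n → Fin m) (h : ∀ (k : Fin n) (i : ι), Δ (σ k) i ≤ Γ k i)
    (d : IA.Der Γ b) : IA.Der Δ b :=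
  d.ren (g := id) σ h

/-- A uniform realizer of symmetry of `=_W`. -/
theorem exists_sym : ∃ s ∈ IA.Sig, ∀ α β : PreW A,
    s ≤ IA.imp (IA.eqW α β) (IA.eqW β α) := by
  have d0 : IA.Der (Fin.elim0 : Fin 0 → PreW A × PreW A → A)
      (fun p => IA.imp (IA.eqW p.1 p.2) (IA.eqW p.2 p.1)) := by
    refine Der.lam ?_
    refine Der.times_elim (a := fun p : PreW A × PreW A => IA.subW p.1 p.2)
      (b := fun p => IA.subW p.2 p.1)
      (Der.var_last.mono fun p => le_of_eq (IA.eqW_def p.1 p.2)) ?_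
    refine (Der.times_intro Der.var_last Der.var_snd).mono
      (fun p => le_of_eq (IA.eqW_def p.2 p.1).symm)
  obtain ⟨e, he, hd⟩ := der_elt d0
  exact ⟨e, he, fun α β => hd (α, β)⟩

/-- The core of the transitivity argument: from `x ⊆ y`, `y ⊆ z` and a transitivity
realizer for the relevant members, derive `x ⊆ z`. -/
theorem der_subW_trans {ι : Type v} {x y z : ι → PreW A} {hh : ι → A}
    (hinst : ∀ (i : ι) (u : (x i).dom) (s : (y i).dom) (w : (z i).dom),
      hh i ≤ IA.imp (IA.eqW ((z i).fam w) ((y i).fam s))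
        (IA.imp (IA.eqW ((y i).fam s) ((x i).fam u))
          (IA.eqW ((z i).fam w) ((x i).fam u)))) :
    IA.Der (Fin.snoc (Fin.snoc (Fin.snoc (Fin.elim0 : Fin 0 → ι → A) hh)
        (fun i => IA.subW (x i) (y i))) (fun i => IA.subW (y i) (z i)))
      (fun i => IA.subW (x i) (z i)) := by
  refine Der.inf (J := fun i => (x i).dom)
    (c := fun i u => IA.imp ((x i).val u) (IA.memW ((x i).fam u) (z i))) ?_
  refine Der.lam (a := fun q : Σ i : ι, (x i).dom => (x q.1).val q.2)
    (b := fun q => IA.memW ((x q.1).fam q.2) (z q.1)) ?_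
  refine Der.aex_elim (J := fun q : Σ i : ι, (x i).dom => (y q.1).dom)
    (f := fun q s => IA.times ((y q.1).val s)
      (IA.eqW ((y q.1).fam s) ((x q.1).fam q.2)))
    (Der.app (a := fun q : Σ i : ι, (x i).dom => (x q.1).val q.2)
      (b := fun q : Σ i : ι, (x i).dom => IA.memW ((x q.1).fam q.2) (y q.1))
      (Der.hyp 1 (fun q => ?_)) Der.var_last) ?_
  case _ =>
    rw [show (1 : Fin 4) = ((Fin.last 1).castSucc).castSucc by decide]
    simp only [Fin.snoc_castSucc, Fin.snoc_last]
    exact iInf_le (fun u => IA.imp ((x q.1).val u)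
      (IA.memW ((x q.1).fam u) (y q.1))) q.2
  refine Der.times_elim
    (a := fun r : Σ q : Σ i : ι, (x i).dom, (y q.1).dom => (y r.1.1).val r.2)
    (b := fun r => IA.eqW ((y r.1.1).fam r.2) ((x r.1.1).fam r.1.2))
    Der.var_last ?_
  refine Der.aex_elim
    (J := fun r : Σ q : Σ i : ι, (x i).dom, (y q.1).dom => (z r.1.1).dom)
    (f := fun r w => IA.times ((z r.1.1).val w)
      (IA.eqW ((z r.1.1).fam w) ((y r.1.1).fam r.2)))
    (Der.app (a := fun r : Σ q : Σ i : ι, (x i).dom, (y q.1).dom =>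
        (y r.1.1).val r.2)
      (b := fun r : Σ q : Σ i : ι, (x i).dom, (y q.1).dom =>
        IA.memW ((y r.1.1).fam r.2) (z r.1.1))
      (Der.hyp 2 (fun r => ?_)) Der.var_snd) ?_
  case _ =>
    rw [show (2 : Fin 7) = ((((Fin.last 2).castSucc).castSucc).castSucc).castSucc by decide]
    simp only [Fin.snoc_castSucc, Fin.snoc_last]
    exact iInf_le (fun s => IA.imp ((y r.1.1).val s)
      (IA.memW ((y r.1.1).fam s) (z r.1.1))) r.2
  refine Der.times_elim
    (a := fun w2 : Σ r : Σ q : Σ i : ι, (x i).dom, (y q.1).dom, (z r.1.1).dom =>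
      (z w2.1.1.1).val w2.2)
    (b := fun w2 => IA.eqW ((z w2.1.1.1).fam w2.2) ((y w2.1.1.1).fam w2.1.2))
    Der.var_last ?_
  -- context (10 entries); target: memW ((x _).fam u) (z _)
  refine Der.aex_intro
    (J := fun w2 : Σ r : Σ q : Σ i : ι, (x i).dom, (y q.1).dom, (z r.1.1).dom =>
      (z w2.1.1.1).dom)
    (f := fun w2 w' => IA.times ((z w2.1.1.1).val w')
      (IA.eqW ((z w2.1.1.1).fam w') ((x w2.1.1.1).fam w2.1.1.2)))
    (fun w2 => w2.2) ?_
  refine Der.times_intro Der.var_snd ?_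
  -- chain the two equalities through the transitivity hypothesis
  refine Der.app (a := fun w2 : Σ r : Σ q : Σ i : ι, (x i).dom, (y q.1).dom,
      (z r.1.1).dom => IA.eqW ((y w2.1.1.1).fam w2.1.2) ((x w2.1.1.1).fam w2.1.1.2)) ?_ ?_
  · refine Der.app (a := fun w2 : Σ r : Σ q : Σ i : ι, (x i).dom, (y q.1).dom,
        (z r.1.1).dom => IA.eqW ((z w2.1.1.1).fam w2.2) ((y w2.1.1.1).fam w2.1.2)) ?_ ?_
    · refine Der.hyp 0 (fun w2 => ?_)
      rw [show (0 : Fin 10) = (((((((((Fin.last 0).castSucc).castSucc).castSucc).castSucc).castSucc).castSucc).castSucc).castSucc).castSucc by decide]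
      simp only [Fin.snoc_castSucc, Fin.snoc_last]
      exact hinst w2.1.1.1 w2.1.1.2 w2.1.2 w2.2
    · exact Der.var_last
  · -- the inner equality hypothesis, at position 6
    refine Der.hyp 6 (fun w2 => ?_)
    rw [show (6 : Fin 10) = (((Fin.last 6).castSucc).castSucc).castSucc by decide]
    simp only [Fin.snoc_castSucc, Fin.snoc_last]
    exact le_rfl

end ImplicativeAlgebra

namespace Ordinal

theorem nadd_comm (a b : Ordinal.{u}) : a ♯ b = b ♯ a := max_comm a b

theorem nadd_assoc (a b c : Ordinal.{u}) : (a ♯ b) ♯ c = a ♯ (b ♯ c) := max_assoc a b c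

theorem nadd_lt_nadd {a b c d : Ordinal.{u}} (h1 : a < b) (h2 : c < d) : a ♯ c < b ♯ d :=
  max_lt (lt_max_of_lt_left h1) (lt_max_of_lt_right h2)

end Ordinal

namespace ImplicativeAlgebra

variable {A : Type u} [CompleteLattice A] {IA : ImplicativeAlgebra A}

theorem nadd3_lt {a b c a' b' c' : Ordinal.{u}} (h1 : a' < a) (h2 : b' < b)
    (h3 : c' < c) : (c' ♯ b') ♯ a' < (a ♯ b) ♯ c := by
  have h : (c' ♯ b') ♯ a' < (c ♯ b) ♯ a :=
    Ordinal.nadd_lt_nadd (Ordinal.nadd_lt_nadd h3 h2) h1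
  have e : (c ♯ b) ♯ a = (a ♯ b) ♯ c := by
    rw [Ordinal.nadd_comm c b, Ordinal.nadd_comm (b ♯ c) a, ← Ordinal.nadd_assoc]
  rwa [e] at h

/-- A uniform realizer of transitivity of `=_W`. -/
theorem exists_trans : ∃ tr ∈ IA.Sig, ∀ a b c : PreW A,
    tr ≤ IA.imp (IA.eqW a b) (IA.imp (IA.eqW b c) (IA.eqW a c)) := by
  classical
  have d0 : IA.Der (Fin.elim0 : Fin 0 → PreW A × PreW A × PreW A → A)
      (fun p => IA.imp
        (⨅ q : {q : PreW A × PreW A × PreW A //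
            (q.1.rank ♯ q.2.1.rank) ♯ q.2.2.rank < (p.1.rank ♯ p.2.1.rank) ♯ p.2.2.rank},
          IA.imp (IA.eqW q.1.1 q.1.2.1)
            (IA.imp (IA.eqW q.1.2.1 q.1.2.2) (IA.eqW q.1.1 q.1.2.2)))
        (IA.imp (IA.eqW p.1 p.2.1)
          (IA.imp (IA.eqW p.2.1 p.2.2) (IA.eqW p.1 p.2.2)))) := by
    refine Der.lam ?_
    refine Der.lam ?_
    refine Der.lam ?_
    refine Der.times_elim (a := fun p : PreW A × PreW A × PreW A => IA.subW p.1 p.2.1)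
      (b := fun p : PreW A × PreW A × PreW A => IA.subW p.2.1 p.1)
      (Der.hyp 1 fun p => ?_) ?_
    · rw [show (1 : Fin 3) = (Fin.last 1).castSucc by decide]
      simp only [Fin.snoc_castSucc, Fin.snoc_last]
      exact le_of_eq (IA.eqW_def _ _)
    refine Der.times_elim (a := fun p : PreW A × PreW A × PreW A => IA.subW p.2.1 p.2.2)
      (b := fun p : PreW A × PreW A × PreW A => IA.subW p.2.2 p.2.1)
      (Der.hyp 2 fun p => ?_) ?_
    · rw [show (2 : Fin 5) = ((Fin.last 2).castSucc).castSucc by decide]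
      simp only [Fin.snoc_castSucc, Fin.snoc_last]
      exact le_of_eq (IA.eqW_def _ _)
    refine (Der.times_intro ?C1 ?C2).mono
      (fun p => le_of_eq (IA.eqW_def p.1 p.2.2).symm)
    case C1 =>
      refine Der.fit ![0, 3, 5] (fun k i => ?_)
        (der_subW_trans (x := fun p : PreW A × PreW A × PreW A => p.1)
          (y := fun p : PreW A × PreW A × PreW A => p.2.1)
          (z := fun p : PreW A × PreW A × PreW A => p.2.2)
          (hh := fun p => ⨅ q : {q : PreW A × PreW A × PreW A //
              (q.1.rank ♯ q.2.1.rank) ♯ q.2.2.rank < (p.1.rank ♯ p.2.1.rank) ♯ p.2.2.rank},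
            IA.imp (IA.eqW q.1.1 q.1.2.1)
              (IA.imp (IA.eqW q.1.2.1 q.1.2.2) (IA.eqW q.1.1 q.1.2.2)))
          (fun i u s w => iInf_le (fun q : {q : PreW A × PreW A × PreW A //
              (q.1.rank ♯ q.2.1.rank) ♯ q.2.2.rank < (i.1.rank ♯ i.2.1.rank) ♯ i.2.2.rank} =>
            IA.imp (IA.eqW q.1.1 q.1.2.1)
              (IA.imp (IA.eqW q.1.2.1 q.1.2.2) (IA.eqW q.1.1 q.1.2.2)))
            ⟨(i.2.2.fam w, i.2.1.fam s, i.1.fam u),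
              nadd3_lt (PreW.fam_rank_lt i.1 u) (PreW.fam_rank_lt i.2.1 s)
                (PreW.fam_rank_lt i.2.2 w)⟩))
      fin_cases k
      · rw [show ((![0, 3, 5] : Fin 3 → Fin 7) ⟨0, by norm_num⟩ : Fin 7) =
          ((((((Fin.last 0).castSucc).castSucc).castSucc).castSucc).castSucc).castSucc by decide]
        simp only [Fin.snoc_castSucc, Fin.snoc_last]
        exact le_rfl
      · rw [show ((![0, 3, 5] : Fin 3 → Fin 7) ⟨1, by norm_num⟩ : Fin 7) =
          (((Fin.last 3).castSucc).castSucc).castSucc by decide]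
        simp only [Fin.snoc_castSucc, Fin.snoc_last]
        exact le_rfl
      · rw [show ((![0, 3, 5] : Fin 3 → Fin 7) ⟨2, by norm_num⟩ : Fin 7) =
          ((Fin.last 5).castSucc) by decide]
        simp only [Fin.snoc_castSucc, Fin.snoc_last]
        exact le_rfl
    case C2 =>
      refine Der.fit ![0, 6, 4] (fun k i => ?_)
        (der_subW_trans (x := fun p : PreW A × PreW A × PreW A => p.2.2)
          (y := fun p : PreW A × PreW A × PreW A => p.2.1)
          (z := fun p : PreW A × PreW A × PreW A => p.1)
          (hh := fun p => ⨅ q : {q : PreW A × PreW A × PreW A //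
              (q.1.rank ♯ q.2.1.rank) ♯ q.2.2.rank < (p.1.rank ♯ p.2.1.rank) ♯ p.2.2.rank},
            IA.imp (IA.eqW q.1.1 q.1.2.1)
              (IA.imp (IA.eqW q.1.2.1 q.1.2.2) (IA.eqW q.1.1 q.1.2.2)))
          (fun i u s w => iInf_le (fun q : {q : PreW A × PreW A × PreW A //
              (q.1.rank ♯ q.2.1.rank) ♯ q.2.2.rank < (i.1.rank ♯ i.2.1.rank) ♯ i.2.2.rank} =>
            IA.imp (IA.eqW q.1.1 q.1.2.1)
              (IA.imp (IA.eqW q.1.2.1 q.1.2.2) (IA.eqW q.1.1 q.1.2.2)))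
            ⟨(i.1.fam w, i.2.1.fam s, i.2.2.fam u),
              Ordinal.nadd_lt_nadd (Ordinal.nadd_lt_nadd (PreW.fam_rank_lt i.1 w)
                (PreW.fam_rank_lt i.2.1 s)) (PreW.fam_rank_lt i.2.2 u)⟩))
      fin_cases k
      · rw [show ((![0, 6, 4] : Fin 3 → Fin 7) ⟨0, by norm_num⟩ : Fin 7) =
          ((((((Fin.last 0).castSucc).castSucc).castSucc).castSucc).castSucc).castSucc by decide]
        simp only [Fin.snoc_castSucc, Fin.snoc_last]
        exact le_rfl
      · rw [show ((![0, 6, 4] : Fin 3 → Fin 7) ⟨1, by norm_num⟩ : Fin 7) =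
          (Fin.last 6) by decide]
        simp only [Fin.snoc_last]
        exact le_rfl
      · rw [show ((![0, 6, 4] : Fin 3 → Fin 7) ⟨2, by norm_num⟩ : Fin 7) =
          ((Fin.last 4).castSucc).castSucc by decide]
        simp only [Fin.snoc_castSucc, Fin.snoc_last]
        exact le_rfl
  obtain ⟨e, he, hd⟩ := der_elt d0
  obtain ⟨r, hr, hle⟩ := IA.sig_fix
    (fun p : PreW A × PreW A × PreW A =>
      IA.imp (IA.eqW p.1 p.2.1) (IA.imp (IA.eqW p.2.1 p.2.2) (IA.eqW p.1 p.2.2)))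
    (fun p => (p.1.rank ♯ p.2.1.rank) ♯ p.2.2.rank) he
    (fun xx p hx => IA.ap_le_of_le_imp (hd p) (le_iInf fun q => hx q.1 q.2))
  exact ⟨r, hr, fun a b c => hle (a, b, c)⟩

end ImplicativeAlgebra
namespace ImplicativeAlgebra

variable {A : Type u} [CompleteLattice A] {IA : ImplicativeAlgebra A}

/-- Congruence of `∈_W` in the element: a uniform realizer of
`γ =_W γ' → γ ∈_W β → γ' ∈_W β`. -/
theorem exists_memL : ∃ m ∈ IA.Sig, ∀ γ γ' β : PreW A,
    m ≤ IA.imp (IA.eqW γ γ') (IA.imp (IA.memW γ β) (IA.memW γ' β)) := by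
  obtain ⟨tr, htr, htr'⟩ := exists_trans (IA := IA)
  have d0 : IA.Der (Fin.elim0 : Fin 0 → PreW A × PreW A × PreW A → A)
      (fun p => IA.imp (IA.eqW p.1 p.2.1)
        (IA.imp (IA.memW p.1 p.2.2) (IA.memW p.2.1 p.2.2))) := by
    refine Der.lam ?_
    refine Der.lam ?_
    refine Der.aex_elim (J := fun p : PreW A × PreW A × PreW A => p.2.2.dom)
      (f := fun p u => IA.times (p.2.2.val u) (IA.eqW (p.2.2.fam u) p.1))
      Der.var_last ?_
    refine Der.times_elim
      (a := fun q : Σ p : PreW A × PreW A × PreW A, p.2.2.dom => q.1.2.2.val q.2)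
      (b := fun q => IA.eqW (q.1.2.2.fam q.2) q.1.1) Der.var_last ?_
    refine Der.aex_intro
      (J := fun q : Σ p : PreW A × PreW A × PreW A, p.2.2.dom => q.1.2.2.dom)
      (f := fun q w => IA.times (q.1.2.2.val w) (IA.eqW (q.1.2.2.fam w) q.1.2.1))
      (fun q => q.2) ?_
    refine Der.times_intro Der.var_snd ?_
    refine Der.app
      (a := fun q : Σ p : PreW A × PreW A × PreW A, p.2.2.dom => IA.eqW q.1.1 q.1.2.1) ?_ ?_
    · refine Der.app
        (a := fun q : Σ p : PreW A × PreW A × PreW A, p.2.2.dom =>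
          IA.eqW (q.1.2.2.fam q.2) q.1.1) ?_ Der.var_last
      exact Der.cst htr (fun q => htr' _ _ _)
    · refine Der.hyp 0 (fun q => ?_)
      rw [show (0 : Fin 5) = ((((Fin.last 0).castSucc).castSucc).castSucc).castSucc by decide]
      simp only [Fin.snoc_castSucc, Fin.snoc_last]
      exact le_rfl
  obtain ⟨e, he, hd⟩ := der_elt d0
  exact ⟨e, he, fun γ γ' β => hd (γ, γ', β)⟩

/-- Congruence of `∈_W` in the set: a uniform realizer of
`β =_W β' → γ ∈_W β → γ ∈_W β'`. -/
theorem exists_memR : ∃ m ∈ IA.Sig, ∀ γ β β' : PreW A,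
    m ≤ IA.imp (IA.eqW β β') (IA.imp (IA.memW γ β) (IA.memW γ β')) := by
  obtain ⟨tr, htr, htr'⟩ := exists_trans (IA := IA)
  have d0 : IA.Der (Fin.elim0 : Fin 0 → PreW A × PreW A × PreW A → A)
      (fun p => IA.imp (IA.eqW p.2.1 p.2.2)
        (IA.imp (IA.memW p.1 p.2.1) (IA.memW p.1 p.2.2))) := by
    refine Der.lam ?_
    refine Der.lam ?_
    refine Der.times_elim (a := fun p : PreW A × PreW A × PreW A => IA.subW p.2.1 p.2.2)
      (b := fun p : PreW A × PreW A × PreW A => IA.subW p.2.2 p.2.1)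
      (Der.hyp 0 fun p => ?_) ?_
    · rw [show (0 : Fin 2) = (Fin.last 0).castSucc by decide]
      simp only [Fin.snoc_castSucc, Fin.snoc_last]
      exact le_of_eq (IA.eqW_def _ _)
    -- context (4): [e, m, s12, s21]; target memW p.1 p.2.2
    refine Der.aex_elim (J := fun p : PreW A × PreW A × PreW A => p.2.1.dom)
      (f := fun p u => IA.times (p.2.1.val u) (IA.eqW (p.2.1.fam u) p.1))
      (Der.hyp 1 fun p => ?_) ?_
    · rw [show (1 : Fin 4) = ((Fin.last 1).castSucc).castSucc by decide]
      simp only [Fin.snoc_castSucc, Fin.snoc_last]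
      exact le_rfl
    refine Der.times_elim
      (a := fun q : Σ p : PreW A × PreW A × PreW A, p.2.1.dom => q.1.2.1.val q.2)
      (b := fun q => IA.eqW (q.1.2.1.fam q.2) q.1.1) Der.var_last ?_
    -- context (7): [e,m,s12,s21,tB,bu,e1]; derive memW (β.fam u) β'
    refine Der.aex_elim
      (J := fun q : Σ p : PreW A × PreW A × PreW A, p.2.1.dom => q.1.2.2.dom)
      (f := fun q w => IA.times (q.1.2.2.val w)
        (IA.eqW (q.1.2.2.fam w) (q.1.2.1.fam q.2)))
      (Der.app
        (a := fun q : Σ p : PreW A × PreW A × PreW A, p.2.1.dom => q.1.2.1.val q.2)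
        (b := fun q => IA.memW (q.1.2.1.fam q.2) q.1.2.2)
        (Der.hyp 2 fun q => ?_) Der.var_snd) ?_
    · rw [show (2 : Fin 7) = ((((Fin.last 2).castSucc).castSucc).castSucc).castSucc by decide]
      simp only [Fin.snoc_castSucc, Fin.snoc_last]
      exact iInf_le (fun u => IA.imp (q.1.2.1.val u)
        (IA.memW (q.1.2.1.fam u) q.1.2.2)) q.2
    refine Der.times_elim
      (a := fun w2 : Σ q : Σ p : PreW A × PreW A × PreW A, p.2.1.dom, q.1.2.2.dom =>
        w2.1.1.2.2.val w2.2)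
      (b := fun w2 => IA.eqW (w2.1.1.2.2.fam w2.2) (w2.1.1.2.1.fam w2.1.2))
      Der.var_last ?_
    -- context (10); target memW γ β'
    refine Der.aex_intro
      (J := fun w2 : Σ q : Σ p : PreW A × PreW A × PreW A, p.2.1.dom, q.1.2.2.dom =>
        w2.1.1.2.2.dom)
      (f := fun w2 w' => IA.times (w2.1.1.2.2.val w')
        (IA.eqW (w2.1.1.2.2.fam w') w2.1.1.1))
      (fun w2 => w2.2) ?_
    refine Der.times_intro Der.var_snd ?_
    refine Der.app
      (a := fun w2 : Σ q : Σ p : PreW A × PreW A × PreW A, p.2.1.dom, q.1.2.2.dom =>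
        IA.eqW (w2.1.1.2.1.fam w2.1.2) w2.1.1.1) ?_ ?_
    · refine Der.app
        (a := fun w2 : Σ q : Σ p : PreW A × PreW A × PreW A, p.2.1.dom, q.1.2.2.dom =>
          IA.eqW (w2.1.1.2.2.fam w2.2) (w2.1.1.2.1.fam w2.1.2)) ?_ Der.var_last
      exact Der.cst htr (fun w2 => htr' _ _ _)
    · refine Der.hyp 6 (fun w2 => ?_)
      rw [show (6 : Fin 10) = (((Fin.last 6).castSucc).castSucc).castSucc by decide]
      simp only [Fin.snoc_castSucc, Fin.snoc_last]
      exact le_rfl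
  obtain ⟨e, he, hd⟩ := der_elt d0
  exact ⟨e, he, fun γ β β' => hd (γ, β, β')⟩

end ImplicativeAlgebra
namespace ImplicativeAlgebra

variable {A : Type u} [CompleteLattice A] (IA : ImplicativeAlgebra A) (κ : Cardinal.{u})

theorem interp_bot {n : ℕ} (v : Fin n → WSet A κ) :
    IA.interp κ (.bot : SetFormula n) v = ⊥ := by rw [interp]
theorem interp_mem {n : ℕ} (i j : Fin n) (v : Fin n → WSet A κ) :
    IA.interp κ (.mem i j) v = IA.memW (v i).1 (v j).1 := by rw [interp]
theorem interp_eq {n : ℕ} (i j : Fin n) (v : Fin n → WSet A κ) :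
    IA.interp κ (.eq i j) v = IA.eqW (v i).1 (v j).1 := by rw [interp]
theorem interp_and {n : ℕ} (φ ψ : SetFormula n) (v : Fin n → WSet A κ) :
    IA.interp κ (.and φ ψ) v = IA.times (IA.interp κ φ v) (IA.interp κ ψ v) := by rw [interp]
theorem interp_or {n : ℕ} (φ ψ : SetFormula n) (v : Fin n → WSet A κ) :
    IA.interp κ (.or φ ψ) v = IA.plus (IA.interp κ φ v) (IA.interp κ ψ v) := by rw [interp]
theorem interp_imp {n : ℕ} (φ ψ : SetFormula n) (v : Fin n → WSet A κ) :
    IA.interp κ (.imp φ ψ) v = IA.imp (IA.interp κ φ v) (IA.interp κ ψ v) := by rw [interp]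
theorem interp_ex {n : ℕ} (φ : SetFormula (n + 1)) (v : Fin n → WSet A κ) :
    IA.interp κ (.ex φ) v
      = IA.aex (fun β : WSet A κ => IA.interp κ φ (Fin.snoc v β)) := by rw [interp]
theorem interp_all {n : ℕ} (φ : SetFormula (n + 1)) (v : Fin n → WSet A κ) :
    IA.interp κ (.all φ) v
      = ⨅ β : WSet A κ, IA.interp κ φ (Fin.snoc v β) := by rw [interp]

end ImplicativeAlgebra

section UpdateSnoc

variable {X : Type*} {m : ℕ}

theorem update_snoc_castSucc (v : Fin m → X) (i : Fin m) (δ β : X) :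
    Function.update (Fin.snoc v β : Fin (m + 1) → X) i.castSucc δ
      = Fin.snoc (Function.update v i δ) β := by
  classical
  funext k
  refine Fin.lastCases ?_ (fun j => ?_) k
  · rw [Function.update_of_ne (Fin.castSucc_lt_last i).ne', Fin.snoc_last, Fin.snoc_last]
  · by_cases hj : j = i
    · subst hj
      rw [Function.update_self, Fin.snoc_castSucc, Function.update_self]
    · rw [Function.update_of_ne (by simpa [Fin.castSucc_inj] using hj),
        Fin.snoc_castSucc, Fin.snoc_castSucc, Function.update_of_ne hj]

theorem update_snoc_last (v : Fin m → X) (x y : X) :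
    Function.update (Fin.snoc v x : Fin (m + 1) → X) (Fin.last m) y = Fin.snoc v y := by
  classical
  funext k
  refine Fin.lastCases ?_ (fun j => ?_) k
  · rw [Function.update_self, Fin.snoc_last]
  · rw [Function.update_of_ne (Fin.castSucc_lt_last j).ne, Fin.snoc_castSucc,
      Fin.snoc_castSucc]

end UpdateSnoc
namespace ImplicativeAlgebra

variable {A : Type u} [CompleteLattice A] {IA : ImplicativeAlgebra A} {κ : Cardinal.{u}}

/-- Leibniz's law: every formula respects `=_W`, with a uniform realizer. -/
theorem der_elt3 {ι₁ ι₂ ι₃ : Type v} {g : ι₁ → ι₂ → ι₃ → A}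
    (d : IA.Der (Fin.elim0 : Fin 0 → ι₁ × ι₂ × ι₃ → A) (fun p => g p.1 p.2.1 p.2.2)) :
    ∃ e ∈ IA.Sig, ∀ x y z, e ≤ g x y z := by
  obtain ⟨e, he, hd⟩ := der_elt d
  exact ⟨e, he, fun x y z => hd (x, y, z)⟩

theorem exists_leib {m : ℕ} (ψ : SetFormula m) : ∀ i : Fin m,
    ∃ ℓ ∈ IA.Sig, ∀ (v : Fin m → WSet A κ) (δ γ : WSet A κ),
      ℓ ≤ IA.imp (IA.eqW δ.1 γ.1)
        (IA.imp (IA.interp κ ψ (Function.update v i δ))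
          (IA.interp κ ψ (Function.update v i γ))) := by
  classical
  induction ψ with
  | @bot m =>
    intro i
    refine der_elt3 ?_
    refine Der.lam ?_
    refine Der.lam ?_
    exact Der.var_last.mono fun p => le_of_eq (by rw [IA.interp_bot, IA.interp_bot])
  | @mem m j k =>
    intro i
    obtain ⟨mL, hmL, hL⟩ := exists_memL (IA := IA)
    obtain ⟨mR, hmR, hR⟩ := exists_memR (IA := IA)
    obtain ⟨rr, hrr, hr⟩ := exists_refl (IA := IA)
    refine der_elt3 ?_
    refine Der.lam ?_
    refine Der.lam ?_
    have de1 : IA.Der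
        (Fin.snoc (Fin.snoc (Fin.elim0 :
            Fin 0 → (Fin m → WSet A κ) × WSet A κ × WSet A κ → A)
          (fun p => IA.eqW p.2.1.1 p.2.2.1))
          (fun p => IA.interp κ (.mem j k) (Function.update p.1 i p.2.1)))
        (fun p => IA.eqW ((Function.update p.1 i p.2.1) j).1
          ((Function.update p.1 i p.2.2) j).1) := by
      by_cases hj : j = i
      · subst hj
        refine Der.hyp 0 (fun p => ?_)
        rw [show (0 : Fin 2) = (Fin.last 0).castSucc by decide]
        simp only [Fin.snoc_castSucc, Fin.snoc_last]
        rw [Function.update_self, Function.update_self]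
      · refine Der.cst hrr (fun p => ?_)
        rw [Function.update_of_ne hj, Function.update_of_ne hj]
        exact hr _
    have de2 : IA.Der
        (Fin.snoc (Fin.snoc (Fin.elim0 :
            Fin 0 → (Fin m → WSet A κ) × WSet A κ × WSet A κ → A)
          (fun p => IA.eqW p.2.1.1 p.2.2.1))
          (fun p => IA.interp κ (.mem j k) (Function.update p.1 i p.2.1)))
        (fun p => IA.eqW ((Function.update p.1 i p.2.1) k).1
          ((Function.update p.1 i p.2.2) k).1) := by
      by_cases hk : k = i
      · subst hk
        refine Der.hyp 0 (fun p => ?_)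
        rw [show (0 : Fin 2) = (Fin.last 0).castSucc by decide]
        simp only [Fin.snoc_castSucc, Fin.snoc_last]
        rw [Function.update_self, Function.update_self]
      · refine Der.cst hrr (fun p => ?_)
        rw [Function.update_of_ne hk, Function.update_of_ne hk]
        exact hr _
    refine Der.mono ?_ (fun p => le_of_eq (IA.interp_mem κ j k _).symm)
    refine Der.app (a := fun p : (Fin m → WSet A κ) × WSet A κ × WSet A κ =>
      IA.memW ((Function.update p.1 i p.2.2) j).1 ((Function.update p.1 i p.2.1) k).1)
      ?_ ?_
    · exact Der.app (a := fun p : (Fin m → WSet A κ) × WSet A κ × WSet A κ =>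
        IA.eqW ((Function.update p.1 i p.2.1) k).1 ((Function.update p.1 i p.2.2) k).1)
        (Der.cst hmR (fun p => hR _ _ _)) de2
    · refine Der.app (a := fun p : (Fin m → WSet A κ) × WSet A κ × WSet A κ =>
        IA.memW ((Function.update p.1 i p.2.1) j).1 ((Function.update p.1 i p.2.1) k).1)
        ?_ ?_
      · exact Der.app (a := fun p : (Fin m → WSet A κ) × WSet A κ × WSet A κ =>
          IA.eqW ((Function.update p.1 i p.2.1) j).1 ((Function.update p.1 i p.2.2) j).1)
          (Der.cst hmL (fun p => hL _ _ _)) de1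
      · exact Der.var_last.mono fun p => le_of_eq (IA.interp_mem κ j k _)
  | @eq m j k =>
    intro i
    obtain ⟨tr, htr, hT⟩ := exists_trans (IA := IA)
    obtain ⟨sy, hsy, hS⟩ := exists_sym (IA := IA)
    obtain ⟨rr, hrr, hr⟩ := exists_refl (IA := IA)
    refine der_elt3 ?_
    refine Der.lam ?_
    refine Der.lam ?_
    have de1 : IA.Der
        (Fin.snoc (Fin.snoc (Fin.elim0 :
            Fin 0 → (Fin m → WSet A κ) × WSet A κ × WSet A κ → A)
          (fun p => IA.eqW p.2.1.1 p.2.2.1))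
          (fun p => IA.interp κ (.eq j k) (Function.update p.1 i p.2.1)))
        (fun p => IA.eqW ((Function.update p.1 i p.2.1) j).1
          ((Function.update p.1 i p.2.2) j).1) := by
      by_cases hj : j = i
      · subst hj
        refine Der.hyp 0 (fun p => ?_)
        rw [show (0 : Fin 2) = (Fin.last 0).castSucc by decide]
        simp only [Fin.snoc_castSucc, Fin.snoc_last]
        rw [Function.update_self, Function.update_self]
      · refine Der.cst hrr (fun p => ?_)
        rw [Function.update_of_ne hj, Function.update_of_ne hj]
        exact hr _
    have de2 : IA.Der
        (Fin.snoc (Fin.snoc (Fin.elim0 :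
            Fin 0 → (Fin m → WSet A κ) × WSet A κ × WSet A κ → A)
          (fun p => IA.eqW p.2.1.1 p.2.2.1))
          (fun p => IA.interp κ (.eq j k) (Function.update p.1 i p.2.1)))
        (fun p => IA.eqW ((Function.update p.1 i p.2.1) k).1
          ((Function.update p.1 i p.2.2) k).1) := by
      by_cases hk : k = i
      · subst hk
        refine Der.hyp 0 (fun p => ?_)
        rw [show (0 : Fin 2) = (Fin.last 0).castSucc by decide]
        simp only [Fin.snoc_castSucc, Fin.snoc_last]
        rw [Function.update_self, Function.update_self]
      · refine Der.cst hrr (fun p => ?_)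
        rw [Function.update_of_ne hk, Function.update_of_ne hk]
        exact hr _
    refine Der.mono ?_ (fun p => le_of_eq (IA.interp_eq κ j k _).symm)
    refine Der.app (a := fun p : (Fin m → WSet A κ) × WSet A κ × WSet A κ =>
      IA.eqW ((Function.update p.1 i p.2.1) k).1 ((Function.update p.1 i p.2.2) k).1)
      ?_ de2
    refine Der.app (a := fun p : (Fin m → WSet A κ) × WSet A κ × WSet A κ =>
      IA.eqW ((Function.update p.1 i p.2.2) j).1 ((Function.update p.1 i p.2.1) k).1)
      (Der.cst htr (fun p => hT _ _ _)) ?_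
    refine Der.app (a := fun p : (Fin m → WSet A κ) × WSet A κ × WSet A κ =>
      IA.eqW ((Function.update p.1 i p.2.1) j).1 ((Function.update p.1 i p.2.1) k).1)
      ?_ (Der.var_last.mono fun p => le_of_eq (IA.interp_eq κ j k _))
    refine Der.app (a := fun p : (Fin m → WSet A κ) × WSet A κ × WSet A κ =>
      IA.eqW ((Function.update p.1 i p.2.2) j).1 ((Function.update p.1 i p.2.1) j).1)
      (Der.cst htr (fun p => hT _ _ _)) ?_
    exact Der.app (a := fun p : (Fin m → WSet A κ) × WSet A κ × WSet A κ =>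
      IA.eqW ((Function.update p.1 i p.2.1) j).1 ((Function.update p.1 i p.2.2) j).1)
      (Der.cst hsy (fun p => hS _ _)) de1
  | @and m φ ψ ih1 ih2 =>
    intro i
    obtain ⟨l1, hl1, h1⟩ := ih1 i
    obtain ⟨l2, hl2, h2⟩ := ih2 i
    refine der_elt3 ?_
    refine Der.lam ?_
    refine Der.lam ?_
    refine Der.times_elim
      (a := fun p : (Fin m → WSet A κ) × WSet A κ × WSet A κ =>
        IA.interp κ φ (Function.update p.1 i p.2.1))
      (b := fun p => IA.interp κ ψ (Function.update p.1 i p.2.1))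
      (Der.var_last.mono fun p => le_of_eq (IA.interp_and κ φ ψ _)) ?_
    refine Der.mono ?_ (fun p => le_of_eq (IA.interp_and κ φ ψ _).symm)
    refine Der.times_intro ?_ ?_
    · refine Der.app (a := fun p : (Fin m → WSet A κ) × WSet A κ × WSet A κ =>
        IA.interp κ φ (Function.update p.1 i p.2.1)) ?_ Der.var_snd
      refine Der.app (a := fun p : (Fin m → WSet A κ) × WSet A κ × WSet A κ =>
        IA.eqW p.2.1.1 p.2.2.1) (Der.cst hl1 (fun p => h1 _ _ _)) ?_
      refine Der.hyp 0 (fun p => ?_)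
      rw [show (0 : Fin 4) = (((Fin.last 0).castSucc).castSucc).castSucc by decide]
      simp only [Fin.snoc_castSucc, Fin.snoc_last]
      exact le_rfl
    · refine Der.app (a := fun p : (Fin m → WSet A κ) × WSet A κ × WSet A κ =>
        IA.interp κ ψ (Function.update p.1 i p.2.1)) ?_ Der.var_last
      refine Der.app (a := fun p : (Fin m → WSet A κ) × WSet A κ × WSet A κ =>
        IA.eqW p.2.1.1 p.2.2.1) (Der.cst hl2 (fun p => h2 _ _ _)) ?_
      refine Der.hyp 0 (fun p => ?_)
      rw [show (0 : Fin 4) = (((Fin.last 0).castSucc).castSucc).castSucc by decide]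
      simp only [Fin.snoc_castSucc, Fin.snoc_last]
      exact le_rfl
  | @or m φ ψ ih1 ih2 =>
    intro i
    obtain ⟨l1, hl1, h1⟩ := ih1 i
    obtain ⟨l2, hl2, h2⟩ := ih2 i
    refine der_elt3 ?_
    refine Der.lam ?_
    refine Der.lam ?_
    refine Der.plus_elim
      (a := fun p : (Fin m → WSet A κ) × WSet A κ × WSet A κ =>
        IA.interp κ φ (Function.update p.1 i p.2.1))
      (b := fun p => IA.interp κ ψ (Function.update p.1 i p.2.1))
      (Der.var_last.mono fun p => le_of_eq (IA.interp_or κ φ ψ _)) ?_ ?_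
    · refine Der.mono ?_ (fun p => le_of_eq (IA.interp_or κ φ ψ _).symm)
      refine Der.plus_inl ?_
      refine Der.app (a := fun p : (Fin m → WSet A κ) × WSet A κ × WSet A κ =>
        IA.interp κ φ (Function.update p.1 i p.2.1)) ?_ Der.var_last
      refine Der.app (a := fun p : (Fin m → WSet A κ) × WSet A κ × WSet A κ =>
        IA.eqW p.2.1.1 p.2.2.1) (Der.cst hl1 (fun p => h1 _ _ _)) ?_
      refine Der.hyp 0 (fun p => ?_)
      rw [show (0 : Fin 3) = ((Fin.last 0).castSucc).castSucc by decide]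
      simp only [Fin.snoc_castSucc, Fin.snoc_last]
      exact le_rfl
    · refine Der.mono ?_ (fun p => le_of_eq (IA.interp_or κ φ ψ _).symm)
      refine Der.plus_inr ?_
      refine Der.app (a := fun p : (Fin m → WSet A κ) × WSet A κ × WSet A κ =>
        IA.interp κ ψ (Function.update p.1 i p.2.1)) ?_ Der.var_last
      refine Der.app (a := fun p : (Fin m → WSet A κ) × WSet A κ × WSet A κ =>
        IA.eqW p.2.1.1 p.2.2.1) (Der.cst hl2 (fun p => h2 _ _ _)) ?_
      refine Der.hyp 0 (fun p => ?_)
      rw [show (0 : Fin 3) = ((Fin.last 0).castSucc).castSucc by decide]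
      simp only [Fin.snoc_castSucc, Fin.snoc_last]
      exact le_rfl
  | @imp m φ ψ ih1 ih2 =>
    intro i
    obtain ⟨l1, hl1, h1⟩ := ih1 i
    obtain ⟨l2, hl2, h2⟩ := ih2 i
    obtain ⟨sy, hsy, hS⟩ := exists_sym (IA := IA)
    refine der_elt3 ?_
    refine Der.lam ?_
    refine Der.mono ?_ (fun p => le_of_eq (by rw [IA.interp_imp, IA.interp_imp]))
    refine Der.lam ?_
    refine Der.lam (a := fun p : (Fin m → WSet A κ) × WSet A κ × WSet A κ =>
      IA.interp κ φ (Function.update p.1 i p.2.2)) ?_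
    -- context: [e, h, a']; target interp ψ (update γ)
    refine Der.app (a := fun p : (Fin m → WSet A κ) × WSet A κ × WSet A κ =>
      IA.interp κ ψ (Function.update p.1 i p.2.1)) ?_ ?_
    · refine Der.app (a := fun p : (Fin m → WSet A κ) × WSet A κ × WSet A κ =>
        IA.eqW p.2.1.1 p.2.2.1) (Der.cst hl2 (fun p => h2 _ _ _)) ?_
      refine Der.hyp 0 (fun p => ?_)
      rw [show (0 : Fin 3) = ((Fin.last 0).castSucc).castSucc by decide]
      simp only [Fin.snoc_castSucc, Fin.snoc_last]
      exact le_rfl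
    · have hyp1 : IA.Der
          (Fin.snoc (Fin.snoc (Fin.snoc (Fin.elim0 :
              Fin 0 → (Fin m → WSet A κ) × WSet A κ × WSet A κ → A)
            (fun p => IA.eqW p.2.1.1 p.2.2.1))
            (fun p => IA.imp (IA.interp κ φ (Function.update p.1 i p.2.1))
              (IA.interp κ ψ (Function.update p.1 i p.2.1))))
            (fun p => IA.interp κ φ (Function.update p.1 i p.2.2)))
          (fun p : (Fin m → WSet A κ) × WSet A κ × WSet A κ =>
            IA.imp (IA.interp κ φ (Function.update p.1 i p.2.1))
              (IA.interp κ ψ (Function.update p.1 i p.2.1))) := by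
        refine Der.hyp 1 (fun p => ?_)
        rw [show (1 : Fin 3) = (Fin.last 1).castSucc by decide]
        simp only [Fin.snoc_castSucc, Fin.snoc_last]
        exact le_rfl
      refine Der.app (a := fun p : (Fin m → WSet A κ) × WSet A κ × WSet A κ =>
        IA.interp κ φ (Function.update p.1 i p.2.1)) hyp1 ?_
      refine Der.app (a := fun p : (Fin m → WSet A κ) × WSet A κ × WSet A κ =>
        IA.interp κ φ (Function.update p.1 i p.2.2)) ?_ Der.var_last
      refine Der.app (a := fun p : (Fin m → WSet A κ) × WSet A κ × WSet A κ =>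
        IA.eqW p.2.2.1 p.2.1.1) (Der.cst hl1 (fun p => h1 p.1 p.2.2 p.2.1)) ?_
      refine Der.app (a := fun p : (Fin m → WSet A κ) × WSet A κ × WSet A κ =>
        IA.eqW p.2.1.1 p.2.2.1) (Der.cst hsy (fun p => hS _ _)) ?_
      refine Der.hyp 0 (fun p => ?_)
      rw [show (0 : Fin 3) = ((Fin.last 0).castSucc).castSucc by decide]
      simp only [Fin.snoc_castSucc, Fin.snoc_last]
      exact le_rfl
  | @ex m φ ih =>
    intro i
    obtain ⟨l1, hl1, h1⟩ := ih i.castSucc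
    refine der_elt3 ?_
    refine Der.lam ?_
    refine Der.lam ?_
    refine Der.aex_elim
      (J := fun _ : (Fin m → WSet A κ) × WSet A κ × WSet A κ => WSet A κ)
      (f := fun p β => IA.interp κ φ (Fin.snoc (Function.update p.1 i p.2.1) β))
      (Der.var_last.mono fun p => le_of_eq (IA.interp_ex κ φ _)) ?_
    refine Der.mono ?_ (fun q => le_of_eq (IA.interp_ex κ φ _).symm)
    refine Der.aex_intro
      (J := fun _ : Σ _ : (Fin m → WSet A κ) × WSet A κ × WSet A κ, WSet A κ => WSet A κ)
      (f := fun q β => IA.interp κ φ (Fin.snoc (Function.update q.1.1 i q.1.2.2) β))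
      (fun q => q.2) ?_
    refine Der.app (a := fun q : Σ _ : (Fin m → WSet A κ) × WSet A κ × WSet A κ, WSet A κ =>
      IA.interp κ φ (Fin.snoc (Function.update q.1.1 i q.1.2.1) q.2)) ?_ Der.var_last
    refine Der.app (a := fun q : Σ _ : (Fin m → WSet A κ) × WSet A κ × WSet A κ, WSet A κ =>
      IA.eqW q.1.2.1.1 q.1.2.2.1) ?_ ?_
    · refine Der.cst hl1 (fun q => ?_)
      have h := h1 (Fin.snoc q.1.1 q.2) q.1.2.1 q.1.2.2
      rw [update_snoc_castSucc, update_snoc_castSucc] at h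
      exact h
    · refine Der.hyp 0 (fun q => ?_)
      rw [show (0 : Fin 3) = ((Fin.last 0).castSucc).castSucc by decide]
      simp only [Fin.snoc_castSucc, Fin.snoc_last]
      exact le_rfl
  | @all m φ ih =>
    intro i
    obtain ⟨l1, hl1, h1⟩ := ih i.castSucc
    refine der_elt3 ?_
    refine Der.lam ?_
    refine Der.lam ?_
    refine Der.mono ?_ (fun p => le_of_eq (IA.interp_all κ φ _).symm)
    refine Der.inf (J := fun _ : (Fin m → WSet A κ) × WSet A κ × WSet A κ => WSet A κ)
      (c := fun p β => IA.interp κ φ (Fin.snoc (Function.update p.1 i p.2.2) β)) ?_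
    refine Der.app (a := fun q : Σ _ : (Fin m → WSet A κ) × WSet A κ × WSet A κ, WSet A κ =>
      IA.interp κ φ (Fin.snoc (Function.update q.1.1 i q.1.2.1) q.2)) ?_ ?_
    · refine Der.app (a := fun q : Σ _ : (Fin m → WSet A κ) × WSet A κ × WSet A κ, WSet A κ =>
        IA.eqW q.1.2.1.1 q.1.2.2.1) ?_ ?_
      · refine Der.cst hl1 (fun q => ?_)
        have h := h1 (Fin.snoc q.1.1 q.2) q.1.2.1 q.1.2.2
        rw [update_snoc_castSucc, update_snoc_castSucc] at h
        exact h
      · refine Der.hyp 0 (fun q => ?_)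
        rw [show (0 : Fin 2) = (Fin.last 0).castSucc by decide]
        simp only [Fin.snoc_castSucc, Fin.snoc_last]
        exact le_rfl
    · refine Der.hyp 1 (fun q => ?_)
      rw [show (1 : Fin 2) = Fin.last 1 by decide]
      simp only [Fin.snoc_last]
      rw [IA.interp_all]
      exact iInf_le _ q.2

end ImplicativeAlgebra
theorem stmt9 {A : Type u} [CompleteLattice A] (IA : ImplicativeAlgebra A)
    (κ : Cardinal.{u}) (hκ : κ.IsInaccessible) (hA : Cardinal.mk A < κ) (n : ℕ) (φ : SetFormula (n + 2)) :
    IA.SigEquiv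
      (fun v : Fin (n + 1) → WSet A κ =>
        IA.interp κ
          (SetFormula.all
            ((SetFormula.mem (Fin.last (n + 1)) ((Fin.last n).castSucc)).imp φ)) v)
      (fun v : Fin (n + 1) → WSet A κ =>
        ⨅ u : (v (Fin.last n)).1.dom,
          IA.imp ((v (Fin.last n)).1.val u)
            (IA.interp κ φ (Fin.snoc v ((v (Fin.last n)).fam u)))) := by
  classical
  open ImplicativeAlgebra in
  constructor
  · -- bounded form follows from the official interpretation
    refine ImplicativeAlgebra.der_sigLe ?_
    refine ImplicativeAlgebra.Der.lam ?_
    obtain ⟨rr, hrr, hr⟩ := ImplicativeAlgebra.exists_refl (IA := IA)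
    refine ImplicativeAlgebra.Der.inf
      (J := fun v : Fin (n + 1) → WSet A κ => (v (Fin.last n)).1.dom)
      (c := fun v u => IA.imp ((v (Fin.last n)).1.val u)
        (IA.interp κ φ (Fin.snoc v ((v (Fin.last n)).fam u)))) ?_
    refine ImplicativeAlgebra.Der.lam
      (a := fun q : Σ v : Fin (n + 1) → WSet A κ, (v (Fin.last n)).1.dom =>
        (q.1 (Fin.last n)).1.val q.2)
      (b := fun q => IA.interp κ φ (Fin.snoc q.1 ((q.1 (Fin.last n)).fam q.2))) ?_
    refine ImplicativeAlgebra.Der.app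
      (a := fun q : Σ v : Fin (n + 1) → WSet A κ, (v (Fin.last n)).1.dom =>
        IA.memW ((q.1 (Fin.last n)).fam q.2).1 (q.1 (Fin.last n)).1)
      (ImplicativeAlgebra.Der.hyp 0 (fun q => ?_)) ?_
    · -- instantiate the universally quantified hypothesis
      rw [show (0 : Fin 2) = (Fin.last 0).castSucc by decide]
      simp only [Fin.snoc_castSucc, Fin.snoc_last]
      rw [IA.interp_all]
      refine (iInf_le _ ((q.1 (Fin.last n)).fam q.2)).trans (le_of_eq ?_)
      rw [IA.interp_imp, IA.interp_mem, Fin.snoc_last, Fin.snoc_castSucc]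
    · -- membership of a member, via reflexivity
      refine ImplicativeAlgebra.Der.aex_intro
        (J := fun q : Σ v : Fin (n + 1) → WSet A κ, (v (Fin.last n)).1.dom =>
          (q.1 (Fin.last n)).1.dom)
        (f := fun q s => IA.times ((q.1 (Fin.last n)).1.val s)
          (IA.eqW ((q.1 (Fin.last n)).1.fam s) ((q.1 (Fin.last n)).fam q.2).1))
        (fun q => q.2) ?_
      refine ImplicativeAlgebra.Der.times_intro ImplicativeAlgebra.Der.var_last ?_
      exact ImplicativeAlgebra.Der.cst hrr (fun q => hr _)
  · refine ImplicativeAlgebra.der_sigLe ?_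
    refine ImplicativeAlgebra.Der.lam ?_
    obtain ⟨lb, hlb, hl⟩ := ImplicativeAlgebra.exists_leib
      (IA := IA) (κ := κ) φ (Fin.last (n + 1))
    refine ImplicativeAlgebra.Der.mono ?_
      (fun v => le_of_eq (IA.interp_all κ _ v).symm)
    refine ImplicativeAlgebra.Der.inf
      (J := fun _ : Fin (n + 1) → WSet A κ => WSet A κ)
      (c := fun v β => IA.interp κ
        ((SetFormula.mem (Fin.last (n + 1)) ((Fin.last n).castSucc)).imp φ)
        (Fin.snoc v β)) ?_
    refine ImplicativeAlgebra.Der.mono ?_ (fun q => by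
      show IA.imp (IA.memW q.2.1 (q.1 (Fin.last n)).1)
          (IA.interp κ φ (Fin.snoc q.1 q.2)) ≤ IA.interp κ
          ((SetFormula.mem (Fin.last (n + 1)) ((Fin.last n).castSucc)).imp φ)
          (Fin.snoc q.1 q.2)
      rw [IA.interp_imp, IA.interp_mem, Fin.snoc_last, Fin.snoc_castSucc])
    refine ImplicativeAlgebra.Der.lam
      (a := fun q : Σ _ : Fin (n + 1) → WSet A κ, WSet A κ =>
        IA.memW q.2.1 (q.1 (Fin.last n)).1)
      (b := fun q => IA.interp κ φ (Fin.snoc q.1 q.2)) ?_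
    refine ImplicativeAlgebra.Der.aex_elim
      (J := fun q : Σ _ : Fin (n + 1) → WSet A κ, WSet A κ =>
        (q.1 (Fin.last n)).1.dom)
      (f := fun q s => IA.times ((q.1 (Fin.last n)).1.val s)
        (IA.eqW ((q.1 (Fin.last n)).1.fam s) q.2.1))
      ImplicativeAlgebra.Der.var_last ?_
    refine ImplicativeAlgebra.Der.times_elim
      (a := fun r : Σ q : Σ _ : Fin (n + 1) → WSet A κ, WSet A κ,
          (q.1 (Fin.last n)).1.dom => (r.1.1 (Fin.last n)).1.val r.2)
      (b := fun r => IA.eqW ((r.1.1 (Fin.last n)).1.fam r.2) r.1.2.1)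
      ImplicativeAlgebra.Der.var_last ?_
    refine ImplicativeAlgebra.Der.app
      (a := fun r : Σ q : Σ _ : Fin (n + 1) → WSet A κ, WSet A κ,
          (q.1 (Fin.last n)).1.dom =>
        IA.interp κ φ (Fin.snoc r.1.1 ((r.1.1 (Fin.last n)).fam r.2))) ?_ ?_
    · refine ImplicativeAlgebra.Der.app
        (a := fun r : Σ q : Σ _ : Fin (n + 1) → WSet A κ, WSet A κ,
            (q.1 (Fin.last n)).1.dom =>
          IA.eqW ((r.1.1 (Fin.last n)).1.fam r.2) r.1.2.1) ?_
        ImplicativeAlgebra.Der.var_last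
      refine ImplicativeAlgebra.Der.cst hlb (fun r => ?_)
      have h := hl (Fin.snoc r.1.1 ((r.1.1 (Fin.last n)).fam r.2))
        ((r.1.1 (Fin.last n)).fam r.2) r.1.2
      rw [update_snoc_last, update_snoc_last] at h
      exact h
    · -- apply the bounded hypothesis
      refine ImplicativeAlgebra.Der.app
        (a := fun r : Σ q : Σ _ : Fin (n + 1) → WSet A κ, WSet A κ,
            (q.1 (Fin.last n)).1.dom => (r.1.1 (Fin.last n)).1.val r.2)
        (ImplicativeAlgebra.Der.hyp 0 (fun r => ?_))
        ImplicativeAlgebra.Der.var_snd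
      rw [show (0 : Fin 5) = ((((Fin.last 0).castSucc).castSucc).castSucc).castSucc
        by decide]
      simp only [Fin.snoc_castSucc, Fin.snoc_last]
      exact iInf_le (fun u => IA.imp ((r.1.1 (Fin.last n)).1.val u)
        (IA.interp κ φ (Fin.snoc r.1.1 ((r.1.1 (Fin.last n)).fam u)))) r.2
end

section
/- Let 𝔸 = (A, ≤, →, Σ) be an implicative algebra with |A| < κ for a strongly inaccessible cardinal κ, and let W, ∈_W, =_W and the interpretation ‖·‖ be as defined below. Then W validates the Union axiom: ‖∀x ∃u ∀y(y ∈ x → ∀z(z ∈ y → z ∈ u))‖ ∈ Σ. -/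
universe u


namespace UnionProof

open ImplicativeAlgebra

variable {A : Type u} [CompleteLattice A] (IA : ImplicativeAlgebra A)

/-- Application in an implicative algebra. -/
def ap (a b : A) : A := sInf {x | a ≤ IA.imp b x}

variable {IA}

theorem le_imp_ap {a b : A} : a ≤ IA.imp b (ap IA a b) := by
  have : IA.imp b (ap IA a b) = ⨅ x ∈ {x | a ≤ IA.imp b x}, IA.imp b x := IA.imp_sInf b _
  rw [this]
  exact le_iInf₂ fun x hx => hx

theorem ap_le_of {a b c : A} (h : a ≤ IA.imp b c) : ap IA a b ≤ c := sInf_le h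

theorem ap_le {t x y a : A} (h1 : t ≤ IA.imp x y) (h2 : a ≤ x) : ap IA t a ≤ y :=
  ap_le_of (h1.trans (IA.imp_antitone h2))

theorem le_imp {c a b : A} (h : ap IA c a ≤ b) : c ≤ IA.imp a b :=
  le_imp_ap.trans (IA.imp_monotone h)

theorem ap_mono {a a' b b' : A} (h : a ≤ a') (h' : b ≤ b') : ap IA a b ≤ ap IA a' b' :=
  ap_le_of (h.trans (le_imp_ap.trans (IA.imp_antitone h')))

theorem ap_mono_left {a a' b : A} (h : a ≤ a') : ap IA a b ≤ ap IA a' b :=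
  ap_mono h le_rfl

theorem ap_mem {a b : A} (ha : a ∈ IA.Sig) (hb : b ∈ IA.Sig) : ap IA a b ∈ IA.Sig :=
  IA.Sig_mp (IA.Sig_upward ha le_imp_ap) hb

variable (IA)

/-- the K combinator -/
def Kv : A := ⨅ a : A, ⨅ b : A, IA.imp a (IA.imp b a)

/-- the S combinator -/
def Sv : A := ⨅ a : A, ⨅ b : A, ⨅ c : A,
  IA.imp (IA.imp a (IA.imp b c)) (IA.imp (IA.imp a b) (IA.imp a c))

variable {IA}

theorem Kv_mem : Kv IA ∈ IA.Sig := IA.Sig_K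

theorem Sv_mem : Sv IA ∈ IA.Sig := IA.Sig_S

theorem Kv_le {a b : A} : Kv IA ≤ IA.imp a (IA.imp b a) :=
  (iInf_le _ a).trans (iInf_le _ b)

theorem Sv_le {a b c : A} :
    Sv IA ≤ IA.imp (IA.imp a (IA.imp b c)) (IA.imp (IA.imp a b) (IA.imp a c)) :=
  ((iInf_le _ a).trans (iInf_le _ b)).trans (iInf_le _ c)

theorem ap_K {a b : A} : ap IA (ap IA (Kv IA) a) b ≤ a :=
  ap_le (ap_le Kv_le le_rfl) le_rfl

theorem ap_S {a b c : A} :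
    ap IA (ap IA (ap IA (Sv IA) a) b) c ≤ ap IA (ap IA a c) (ap IA b c) := by
  have h1 : a ≤ IA.imp c (IA.imp (ap IA b c) (ap IA (ap IA a c) (ap IA b c))) :=
    le_imp_ap.trans (IA.imp_monotone le_imp_ap)
  have h2 : b ≤ IA.imp c (ap IA b c) := le_imp_ap
  exact ap_le (ap_le (ap_le Sv_le h1) h2) le_rfl

/-- Untyped combinatory/λ terms, de Bruijn style. -/
inductive Tm : Type
  | var : ℕ → Tm
  | kk : Tm
  | ss : Tm
  | app : Tm → Tm → Tm

namespace Tm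

/-- Denotation of a term in an environment. -/
def den (IA : ImplicativeAlgebra A) : Tm → List A → A
  | var i, ρ => ρ.getD i ⊥
  | kk, _ => Kv IA
  | ss, _ => Sv IA
  | app t u, ρ => ap IA (den IA t ρ) (den IA u ρ)

/-- Bracket abstraction: `lam t` binds de Bruijn variable `0` of `t`. -/
def lam : Tm → Tm
  | var 0 => app (app ss kk) kk
  | var (j+1) => app kk (var j)
  | kk => app kk kk
  | ss => app kk ss
  | app t u => app (app ss (lam t)) (lam u)

/-- Well-scopedness in a context of size `n`. -/
def WS (n : ℕ) : Tm → Prop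
  | var i => i < n
  | app t u => WS n t ∧ WS n u
  | _ => True

theorem WS_lam {n : ℕ} : ∀ {t : Tm}, WS (n + 1) t → WS n (lam t)
  | var 0, _ => ⟨⟨trivial, trivial⟩, trivial⟩
  | var (j+1), h => ⟨trivial, Nat.lt_of_succ_lt_succ h⟩
  | kk, _ => ⟨trivial, trivial⟩
  | ss, _ => ⟨trivial, trivial⟩
  | app t u, h => ⟨⟨trivial, WS_lam h.1⟩, WS_lam h.2⟩

theorem WS_mono {n m : ℕ} (hnm : n ≤ m) : ∀ {t : Tm}, WS n t → WS m t
  | var i, h => lt_of_lt_of_le h hnm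
  | kk, _ => trivial
  | ss, _ => trivial
  | app _ _, h => ⟨WS_mono hnm h.1, WS_mono hnm h.2⟩

/-- β-reduction inequality. -/
theorem den_lam {t : Tm} {ρ : List A} {a : A} :
    ap IA (den IA (lam t) ρ) a ≤ den IA t (a :: ρ) := by
  induction t generalizing ρ a with
  | var i =>
    cases i with
    | zero => exact ap_S.trans ap_K
    | succ j => exact ap_K
  | kk => exact ap_K
  | ss => exact ap_K
  | app t u iht ihu =>
    exact ap_S.trans (ap_mono iht ihu)

theorem den_lam2 {t : Tm} {ρ : List A} {a b : A} :
    ap IA (ap IA (den IA (lam (lam t)) ρ) a) b ≤ den IA t (b :: a :: ρ) :=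
  (ap_mono_left den_lam).trans den_lam

theorem den_lam3 {t : Tm} {ρ : List A} {a b c : A} :
    ap IA (ap IA (ap IA (den IA (lam (lam (lam t))) ρ) a) b) c ≤
      den IA t (c :: b :: a :: ρ) :=
  (ap_mono_left den_lam2).trans den_lam

theorem den_congr {ρ ρ' : List A} :
    ∀ {t : Tm} {n : ℕ}, WS n t → (∀ i < n, ρ.getD i ⊥ = ρ'.getD i ⊥) →
      den IA t ρ = den IA t ρ'
  | var i, n, h, he => he i h
  | kk, _, _, _ => rfl
  | ss, _, _, _ => rfl
  | app t u, n, h, he => by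
    show ap IA _ _ = ap IA _ _
    rw [den_congr h.1 he, den_congr h.2 he]

theorem den_closed {t : Tm} (h : WS 0 t) (ρ : List A) :
    den IA t ρ = den IA t [] :=
  den_congr h (fun i hi => absurd hi (Nat.not_lt_zero i))

theorem den_mem : ∀ {t : Tm} {n : ℕ} {ρ : List A}, WS n t → n ≤ ρ.length →
    (∀ a ∈ ρ, a ∈ IA.Sig) → den IA t ρ ∈ IA.Sig
  | var i, n, ρ, h, hn, hρ => by
    have hi : i < ρ.length := lt_of_lt_of_le h hn
    show ρ.getD i ⊥ ∈ IA.Sig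
    rw [List.getD_eq_getElem ρ ⊥ hi]
    exact hρ _ (ρ.getElem_mem hi)
  | kk, _, _, _, _, _ => Kv_mem
  | ss, _, _, _, _, _ => Sv_mem
  | app t u, n, ρ, h, hn, hρ => ap_mem (den_mem h.1 hn hρ) (den_mem h.2 hn hρ)

theorem den_mem_nil {t : Tm} (h : WS 0 t) : den IA t [] ∈ IA.Sig :=
  den_mem h (Nat.le_refl 0) (fun a ha => absurd ha List.not_mem_nil)

end Tm

end UnionProof

namespace UnionProof

open ImplicativeAlgebra Tm

local infixl:65 " ⬝ " => Tm.app
local notation "v" => Tm.var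
local notation "ƛ" => Tm.lam

variable {A : Type u} [CompleteLattice A] {IA : ImplicativeAlgebra A}

theorem eqW_def (α β : PreW A) :
    IA.eqW α β = IA.times (IA.subW α β) (IA.subW β α) := by
  cases α; cases β; rw [ImplicativeAlgebra.eqW]; rfl

theorem times_le {a b x : A} :
    IA.times a b ≤ IA.imp (IA.imp a (IA.imp b x)) x := iInf_le _ x

theorem aex_le {ι : Sort*} {f : ι → A} {x : A} :
    IA.aex f ≤ IA.imp (⨅ i, IA.imp (f i) x) x := iInf_le _ x

theorem subW_le (α β : PreW A) (t : α.dom) :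
    IA.subW α β ≤ IA.imp (α.val t) (IA.memW (α.fam t) β) := iInf_le _ t

/-- `λv λk. e₁ (λa₁ λb₁. ((a₁ v) (λc. c (λw λd. e₂ (λa₂ λb₂. ((a₂ w) (λc'. c'
(λw' λd'. k (λf'. (f' w') ((τ' d') d)))))))))` : 1st component of transitivity realizer. -/
def s1Tm : Tm :=
  ƛ (ƛ (v 4 ⬝
   ƛ (ƛ ((v 1 ⬝ v 3) ⬝
    ƛ (v 0 ⬝
     ƛ (ƛ (v 8 ⬝
      ƛ (ƛ ((v 1 ⬝ v 3) ⬝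
       ƛ (v 0 ⬝
        ƛ (ƛ (v 10 ⬝
         ƛ ((v 0 ⬝ v 2) ⬝ ((v 16 ⬝ v 1) ⬝ v 6))))))))))))))

def s2Tm : Tm :=
  ƛ (ƛ (v 3 ⬝
   ƛ (ƛ ((v 0 ⬝ v 3) ⬝
    ƛ (v 0 ⬝
     ƛ (ƛ (v 9 ⬝
      ƛ (ƛ ((v 0 ⬝ v 3) ⬝
       ƛ (v 0 ⬝
        ƛ (ƛ (v 10 ⬝
         ƛ ((v 0 ⬝ v 2) ⬝ ((v 16 ⬝ v 1) ⬝ v 6))))))))))))))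

/-- `λτ' λe₁ λe₂ λf. (f s₁) s₂` -/
def FTm : Tm := ƛ (ƛ (ƛ (ƛ ((v 0 ⬝ s1Tm) ⬝ s2Tm))))

/-- `λz λf. f ((z z) f)` : Turing-style fixpoint former. -/
def thTm : Tm := ƛ (ƛ (v 0 ⬝ ((v 1 ⬝ v 1) ⬝ v 0)))

/-- The transitivity realizer, a fixpoint. -/
def tauTm : Tm := (thTm ⬝ thTm) ⬝ FTm

set_option maxRecDepth 10000 in
theorem WS_s1Tm : WS 4 s1Tm := by
  unfold s1Tm
  repeat first
    | apply WS_lam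
    | exact trivial
    | refine ⟨?_, ?_⟩
    | exact Nat.lt_of_sub_eq_succ rfl

set_option maxRecDepth 10000 in
theorem WS_s2Tm : WS 4 s2Tm := by
  unfold s2Tm
  repeat first
    | apply WS_lam
    | exact trivial
    | refine ⟨?_, ?_⟩
    | exact Nat.lt_of_sub_eq_succ rfl

set_option maxRecDepth 10000 in
theorem WS_tauTm : WS 0 tauTm := by
  unfold tauTm FTm thTm
  repeat first
    | apply WS_lam
    | exact trivial
    | exact WS_s1Tm
    | exact WS_s2Tm
    | refine ⟨?_, ?_⟩
    | exact Nat.lt_of_sub_eq_succ rfl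

end UnionProof

namespace UnionProof

open ImplicativeAlgebra Tm

variable {A : Type u} [CompleteLattice A] {IA : ImplicativeAlgebra A}

variable (IA) in
/-- The semantic transitivity realizer. -/
noncomputable def tauv : A := den IA tauTm []

theorem tau_fix : tauv IA ≤ ap IA (den IA FTm []) (tauv IA) :=
  (ap_mono_left den_lam).trans den_lam


theorem le_times {c a b : A} (h : ∀ x : A, ap IA c (IA.imp a (IA.imp b x)) ≤ x) :
    c ≤ IA.times a b := le_iInf fun x => le_imp (h x)

theorem le_memW {c : A} {β z : PreW A}
    (h : ∀ x : A, ap IA c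
      (⨅ s : β.dom, IA.imp (IA.times (β.val s) (IA.eqW (β.fam s) z)) x) ≤ x) :
    c ≤ IA.memW z β := le_iInf fun x => le_imp (h x)

theorem le_subW {c : A} {α β : PreW A}
    (h : ∀ t : α.dom, ap IA c (α.val t) ≤ IA.memW (α.fam t) β) :
    c ≤ IA.subW α β := le_iInf fun t => le_imp (h t)

theorem rank_fam_lt (w : PreW A) (i : w.dom) : (w.fam i).rank < w.rank := by
  cases w with | mk ι f v => exact PreW.rank_lt_mk f v i

theorem trans_le : ∀ α β γ : PreW A,
    tauv IA ≤ IA.imp (IA.eqW α β) (IA.imp (IA.eqW β γ) (IA.eqW α γ)) := by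
  suffices h : ∀ o : Ordinal, ∀ α β γ : PreW A, max (max α.rank β.rank) γ.rank = o →
      tauv IA ≤ IA.imp (IA.eqW α β) (IA.imp (IA.eqW β γ) (IA.eqW α γ)) from
    fun α β γ => h _ α β γ rfl
  intro o
  induction o using Ordinal.induction with
  | h o IH =>
  intro α β γ ho
  refine le_imp (le_imp ?_)
  refine le_trans (ap_mono_left (ap_mono_left tau_fix)) ?_
  refine le_trans den_lam3 ?_
  rw [show IA.eqW α γ = IA.times (IA.subW α γ) (IA.subW γ α) from eqW_def α γ]
  refine le_times fun x => ?_
  refine le_trans den_lam ?_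
  refine ap_le (ap_le le_rfl ?h1) ?h2
  case h1 =>
    -- den s1Tm env ≤ subW α γ
    refine le_subW fun t => ?_
    refine le_memW fun x' => ?_
    refine le_trans den_lam2 ?_
    refine ap_le ((eqW_def α β).le.trans times_le) (le_imp (le_imp ?_))
    refine le_trans den_lam2 ?_
    refine ap_le ((ap_le (subW_le α β t) le_rfl).trans aex_le) ?_
    refine le_iInf fun s => le_imp ?_
    refine le_trans den_lam ?_
    refine ap_le times_le (le_imp (le_imp ?_))
    refine le_trans den_lam2 ?_
    refine ap_le ((eqW_def β γ).le.trans times_le) (le_imp (le_imp ?_))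
    refine le_trans den_lam2 ?_
    refine ap_le ((ap_le (subW_le β γ s) le_rfl).trans aex_le) ?_
    refine le_iInf fun r => le_imp ?_
    refine le_trans den_lam ?_
    refine ap_le times_le (le_imp (le_imp ?_))
    refine le_trans den_lam2 ?_
    refine ap_le (iInf_le _ r) ?_
    refine le_times fun x'' => ?_
    refine le_trans den_lam ?_
    refine ap_le (ap_le le_rfl le_rfl) (ap_le (ap_le ?_ le_rfl) le_rfl)
    refine IH _ ?_ (γ.fam r) (β.fam s) (α.fam t) rfl
    rw [← ho]
    exact max_lt (max_lt (lt_max_of_lt_right (rank_fam_lt γ r))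
      (lt_max_of_lt_left (lt_max_of_lt_right (rank_fam_lt β s))))
      (lt_max_of_lt_left (lt_max_of_lt_left (rank_fam_lt α t)))
  case h2 =>
    -- den s2Tm env ≤ subW γ α
    refine le_subW fun t => ?_
    refine le_memW fun x' => ?_
    refine le_trans den_lam2 ?_
    refine ap_le ((eqW_def β γ).le.trans times_le) (le_imp (le_imp ?_))
    refine le_trans den_lam2 ?_
    refine ap_le ((ap_le (subW_le γ β t) le_rfl).trans aex_le) ?_
    refine le_iInf fun s => le_imp ?_
    refine le_trans den_lam ?_
    refine ap_le times_le (le_imp (le_imp ?_))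
    refine le_trans den_lam2 ?_
    refine ap_le ((eqW_def α β).le.trans times_le) (le_imp (le_imp ?_))
    refine le_trans den_lam2 ?_
    refine ap_le ((ap_le (subW_le β α s) le_rfl).trans aex_le) ?_
    refine le_iInf fun r => le_imp ?_
    refine le_trans den_lam ?_
    refine ap_le times_le (le_imp (le_imp ?_))
    refine le_trans den_lam2 ?_
    refine ap_le (iInf_le _ r) ?_
    refine le_times fun x'' => ?_
    refine le_trans den_lam ?_
    refine ap_le (ap_le le_rfl le_rfl) (ap_le (ap_le ?_ le_rfl) le_rfl)
    refine IH _ ?_ (α.fam r) (β.fam s) (γ.fam t) rfl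
    rw [← ho]
    exact max_lt (max_lt (lt_max_of_lt_left (lt_max_of_lt_left (rank_fam_lt α r)))
      (lt_max_of_lt_left (lt_max_of_lt_right (rank_fam_lt β s))))
      (lt_max_of_lt_right (rank_fam_lt γ t))

end UnionProof


namespace UnionProof

open ImplicativeAlgebra Tm

local infixl:65 " ⬝ " => Tm.app
local notation "v" => Tm.var
local notation "ƛ" => Tm.lam

variable {A : Type u} [CompleteLattice A] {IA : ImplicativeAlgebra A}

theorem le_aex {ι : Sort*} {c : A} {f : ι → A}
    (h : ∀ x : A, ap IA c (⨅ i, IA.imp (f i) x) ≤ x) : c ≤ IA.aex f :=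
  le_iInf fun x => le_imp (h x)

/-- The union of `a`, as a pre-element of the hierarchy. -/
def uni (a : PreW A) : PreW A :=
  .mk (Σ t : a.dom, (a.fam t).dom) (fun p => (a.fam p.1).fam p.2)
    (fun p => (a.fam p.1).val p.2)

theorem HSmall_dom_lt {κ : Cardinal.{u}} {w : PreW A} (h : w.HSmall κ) :
    Cardinal.mk w.dom < κ := by
  cases w; exact h.1

theorem uni_hsmall {κ : Cardinal.{u}} (hκ : κ.IsInaccessible) {a : PreW A}
    (ha : a.HSmall κ) : (uni a).HSmall κ := by
  refine ⟨?_, fun p => (ha.fam p.1).fam p.2⟩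
  rw [Cardinal.mk_sigma]
  exact Cardinal.sum_lt_of_isRegular hκ.isRegular (HSmall_dom_lt ha)
    (fun t => HSmall_dom_lt (ha.fam t))

/-- The realizer of `∀y (y ∈ a → ∀z (z ∈ y → z ∈ ⋃a))`. -/
def rTm : Tm :=
  ƛ (ƛ (ƛ (v 2 ⬝
   ƛ (v 0 ⬝
    ƛ (ƛ (v 4 ⬝
     ƛ (v 0 ⬝
      ƛ (ƛ (v 3 ⬝
       ƛ (ƛ ((v 0 ⬝ v 3) ⬝
        ƛ (v 0 ⬝
         ƛ (ƛ (v 11 ⬝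
          ƛ ((v 0 ⬝ v 2) ⬝ ((tauTm ⬝ v 1) ⬝ v 6))))))))))))))))

/-- The realizer of the union axiom: `λk. k r`. -/
def sigTm : Tm := ƛ (v 0 ⬝ rTm)

set_option maxRecDepth 10000 in
theorem WS_sigTm : WS 0 sigTm := by
  unfold sigTm rTm
  repeat first
    | apply WS_lam
    | exact trivial
    | exact WS_mono (Nat.zero_le _) WS_tauTm
    | refine ⟨?_, ?_⟩
    | exact Nat.lt_of_sub_eq_succ rfl

theorem r_le {κ : Cardinal.{u}} (a : PreW A) (ρ : List A) :
    den IA rTm ρ ≤ ⨅ y : WSet A κ, IA.imp (IA.memW y.1 a)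
      (⨅ z : WSet A κ, IA.imp (IA.memW z.1 y.1) (IA.memW z.1 (uni a))) := by
  refine le_iInf fun y => le_imp (le_iInf fun z => le_imp (le_memW fun x => ?_))
  refine le_trans den_lam3 ?_
  refine ap_le aex_le ?_
  refine le_iInf fun t => le_imp ?_
  refine le_trans den_lam ?_
  refine ap_le times_le (le_imp (le_imp ?_))
  refine le_trans den_lam2 ?_
  refine ap_le aex_le ?_
  refine le_iInf fun s' => le_imp ?_
  refine le_trans den_lam ?_
  refine ap_le times_le (le_imp (le_imp ?_))
  refine le_trans den_lam2 ?_
  refine ap_le ((eqW_def (a.fam t) y.1).le.trans times_le) (le_imp (le_imp ?_))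
  refine le_trans den_lam2 ?_
  refine ap_le ((ap_le (subW_le y.1 (a.fam t) s') le_rfl).trans aex_le) ?_
  refine le_iInf fun s => le_imp ?_
  refine le_trans den_lam ?_
  refine ap_le times_le (le_imp (le_imp ?_))
  refine le_trans den_lam2 ?_
  refine ap_le (iInf_le _ (⟨t, s⟩ : (uni a).dom)) ?_
  refine le_times fun x'' => ?_
  refine le_trans den_lam ?_
  refine ap_le (ap_le le_rfl le_rfl) (ap_le (ap_le ?_ le_rfl) le_rfl)
  rw [den_closed WS_tauTm]
  exact trans_le ((a.fam t).fam s) (y.1.fam s') z.1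

theorem sigma_le {κ : Cardinal.{u}} (hκ : κ.IsInaccessible) :
    den IA sigTm [] ≤ ⨅ α : WSet A κ, IA.aex (fun υ : WSet A κ =>
      ⨅ y : WSet A κ, IA.imp (IA.memW y.1 α.1)
        (⨅ z : WSet A κ, IA.imp (IA.memW z.1 y.1) (IA.memW z.1 υ.1))) := by
  refine le_iInf fun α => le_aex fun x => ?_
  refine le_trans den_lam ?_
  refine ap_le (iInf_le _ (⟨uni α.1, uni_hsmall hκ α.2⟩ : WSet A κ)) ?_
  exact r_le α.1 _

end UnionProof

theorem stmt14 {A : Type u} [CompleteLattice A] (IA : ImplicativeAlgebra A)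
    (κ : Cardinal.{u}) (hκ : κ.IsInaccessible) (hA : Cardinal.mk A < κ) :
    IA.interp κ
      (SetFormula.all (SetFormula.ex (SetFormula.all
        ((SetFormula.mem 2 0).imp
          (SetFormula.all ((SetFormula.mem 3 2).imp (SetFormula.mem 3 1)))))))
      (fun i => i.elim0) ∈ IA.Sig := by
  refine IA.Sig_upward (UnionProof.Tm.den_mem_nil UnionProof.WS_sigTm) ?_
  exact UnionProof.sigma_le hκ
end
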